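/- arXiv:2001.08416 — 4 statements merged into one kernel-verified Lean document; each statement's English description precedes it below -/
import Mathlib

section
/- If in a necklace with k·a_i beads of color i (1 ≤ i ≤ s, each a_i ≥ 1, k ≥ 2) the beads of each color appear contiguously (i.e., for each color i the set of positions with color i is an interval of consecutive integers), then every k-splitting of the necklace has size at least (k−1)·s. -/
/-- On an interval `[l, u]`, the number of distinct values of `t` is at most the number
of "cuts" inside the interval plus one. -/
lemma necklace_image_card_le (t : ℕ → ℕ) (l u : ℕ) (h : l ≤ u) :
    ((Finset.Icc l u).image t).card ≤
      ((Finset.Ico l u).filter (fun x => t x ≠ t (x + 1))).card + 1 := by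
  induction u, h using Nat.le_induction with
  | base => simp
  | succ u hu ih =>
    have hIcc : Finset.Icc l (u + 1) = insert (u + 1) (Finset.Icc l u) := by
      ext x; simp only [Finset.mem_Icc, Finset.mem_insert]; omega
    have hIco : Finset.Ico l (u + 1) = insert u (Finset.Ico l u) := by
      ext x; simp only [Finset.mem_Ico, Finset.mem_insert]; omega
    have hnotmem : u ∉ Finset.Ico l u := by simp
    by_cases hcut : t u ≠ t (u + 1)
    · have hcard : ((Finset.Ico l (u + 1)).filter (fun x => t x ≠ t (x + 1))).card =
          ((Finset.Ico l u).filter (fun x => t x ≠ t (x + 1))).card + 1 := by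
        rw [hIco, Finset.filter_insert, if_pos hcut,
          Finset.card_insert_of_notMem (fun hx => hnotmem (Finset.mem_filter.mp hx).1)]
      rw [hIcc, Finset.image_insert, hcard]
      calc (insert (t (u + 1)) ((Finset.Icc l u).image t)).card
          ≤ ((Finset.Icc l u).image t).card + 1 := Finset.card_insert_le _ _
        _ ≤ _ := by omega
    · push_neg at hcut
      have hmem : t (u + 1) ∈ (Finset.Icc l u).image t := by
        rw [← hcut]
        exact Finset.mem_image.mpr ⟨u, Finset.mem_Icc.mpr ⟨hu, le_refl u⟩, rfl⟩
      have himg : (Finset.Icc l (u + 1)).image t = (Finset.Icc l u).image t := by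
        rw [hIcc, Finset.image_insert, Finset.insert_eq_self.mpr hmem]
      have hmono : ((Finset.Ico l u).filter (fun x => t x ≠ t (x + 1))).card ≤
          ((Finset.Ico l (u + 1)).filter (fun x => t x ≠ t (x + 1))).card := by
        apply Finset.card_le_card
        apply Finset.filter_subset_filter
        rw [hIco]; exact Finset.subset_insert _ _
      rw [himg]; omega

/-- If in a necklace with `k * a i` beads of color `i` (`1 ≤ i ≤ s`) the beads of each
color appear contiguously, then every `k`-splitting has at least `(k - 1) * s` cuts.
Beads are positions `1, …, k * n` where `n = a 1 + ⋯ + a s`; `c x` is the color of bead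
`x`; a splitting is an assignment `t` of beads to the `k` thieves giving each thief
exactly `a i` beads of each color `i`; a cut is a position `x < k * n` with
`t x ≠ t (x + 1)`. -/
theorem necklace_splitting_lower_bound (k s : ℕ) (hk : 2 ≤ k) (hs : 1 ≤ s)
    (a : ℕ → ℕ) (ha : ∀ i ∈ Finset.Icc 1 s, 1 ≤ a i)
    (n : ℕ) (hn : n = ∑ i ∈ Finset.Icc 1 s, a i)
    (c : ℕ → ℕ) (hc : ∀ x ∈ Finset.Icc 1 (k * n), c x ∈ Finset.Icc 1 s)
    (hcount : ∀ i ∈ Finset.Icc 1 s,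
      ((Finset.Icc 1 (k * n)).filter (fun x => c x = i)).card = k * a i)
    (hcontig : ∀ i ∈ Finset.Icc 1 s, ∃ l u : ℕ,
      (Finset.Icc 1 (k * n)).filter (fun x => c x = i) = Finset.Icc l u)
    (t : ℕ → ℕ)
    (ht : ∀ x ∈ Finset.Icc 1 (k * n), t x ∈ Finset.Icc 1 k)
    (hsplit : ∀ j ∈ Finset.Icc 1 k, ∀ i ∈ Finset.Icc 1 s,
      ((Finset.Icc 1 (k * n)).filter (fun x => c x = i ∧ t x = j)).card = a i) :
    (k - 1) * s ≤ ((Finset.Ico 1 (k * n)).filter (fun x => t x ≠ t (x + 1))).card := by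
  classical
  set C := (Finset.Ico 1 (k * n)).filter (fun x => t x ≠ t (x + 1)) with hC
  have key : ∀ i ∈ Finset.Icc 1 s, k - 1 ≤ (C.filter (fun x => c x = i)).card := by
    intro i hi
    obtain ⟨l, u, hlu⟩ := hcontig i hi
    have hcard : (Finset.Icc l u).card = k * a i := by rw [← hlu]; exact hcount i hi
    have hai := ha i hi
    have hpos : 0 < k * a i := by positivity
    have hle : l ≤ u := by
      by_contra h
      rw [Finset.Icc_eq_empty (by omega), Finset.card_empty] at hcard
      omega
    have hsub : Finset.Icc l u ⊆ Finset.Icc 1 (k * n) := by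
      rw [← hlu]; exact Finset.filter_subset _ _
    have himg : Finset.Icc 1 k ⊆ (Finset.Icc l u).image t := by
      intro j hj
      have hsj := hsplit j hj i hi
      have hpos' : 0 < ((Finset.Icc 1 (k * n)).filter (fun x => c x = i ∧ t x = j)).card := by
        rw [hsj]; omega
      obtain ⟨x, hx⟩ := Finset.card_pos.mp hpos'
      simp only [Finset.mem_filter] at hx
      refine Finset.mem_image.mpr ⟨x, ?_, hx.2.2⟩
      rw [← hlu]; exact Finset.mem_filter.mpr ⟨hx.1, hx.2.1⟩
    have hk' : k ≤ ((Finset.Icc l u).image t).card := by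
      calc k = (Finset.Icc 1 k).card := by simp
        _ ≤ _ := Finset.card_le_card himg
    have hmain := necklace_image_card_le t l u hle
    have hsub2 : (Finset.Ico l u).filter (fun x => t x ≠ t (x + 1)) ⊆
        C.filter (fun x => c x = i) := by
      intro x hx
      simp only [Finset.mem_filter, Finset.mem_Ico] at hx
      have hxblk : x ∈ Finset.Icc l u := Finset.mem_Icc.mpr ⟨hx.1.1, le_of_lt hx.1.2⟩
      have hxc : c x = i := by
        have h2 := hxblk
        rw [← hlu] at h2
        exact (Finset.mem_filter.mp h2).2
      have hbnds := Finset.mem_Icc.mp (hsub hxblk)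
      have huu : u ≤ k * n :=
        (Finset.mem_Icc.mp (hsub (Finset.mem_Icc.mpr ⟨hle, le_refl u⟩))).2
      simp only [hC, Finset.mem_filter, Finset.mem_Ico]
      exact ⟨⟨⟨hbnds.1, by omega⟩, hx.2⟩, hxc⟩
    have hle2 := Finset.card_le_card hsub2
    omega
  have hCsub : ∀ x ∈ C, c x ∈ Finset.Icc 1 s := by
    intro x hx
    simp only [hC, Finset.mem_filter, Finset.mem_Ico] at hx
    exact hc x (Finset.mem_Icc.mpr ⟨hx.1.1, by omega⟩)
  have hsum : C.card = ∑ i ∈ Finset.Icc 1 s, (C.filter (fun x => c x = i)).card :=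
    Finset.card_eq_sum_card_fiberwise hCsub
  calc (k - 1) * s = ∑ _i ∈ Finset.Icc 1 s, (k - 1) := by simp [mul_comm]
    _ ≤ ∑ i ∈ Finset.Icc 1 s, (C.filter (fun x => c x = i)).card := Finset.sum_le_sum key
    _ = C.card := hsum.symm
end

section
/- Let G = (V, E) be a finite connected graph, let T ⊆ V be a set of terminals with a distinguished vertex d ∈ T and |T| ≥ 2, and let x be an integer with 1 ≤ x ≤ |E|. Let G′ be the graph obtained from G by attaching to each vertex t ∈ T \ {d} a new pendant path with exactly |E| edges (the internal vertices of these paths are new and the paths are pairwise disjoint). Then G contains a connected subgraph S with T ⊆ V(S) and |E(S)| ≤ x if and only if there exist connected subgraphs G_1 and G_2 of G′, each containing the vertex d, with |E(G_1)| = (|T|−1)·|E| + x, |E(G_2)| = |E|, and E(G′) = E(G_1) ∪ E(G_2). -/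
/-- The base relation for the graph `G'` obtained from `G` by attaching to each
terminal `t ∈ T \ {d}` a pendant path with `m` new vertices `(t, 0), …, (t, m - 1)`:
old edges of `G`, the edge from `t` to `(t, 0)`, and the path edges
`(t, i) — (t, i + 1)`. -/
def attachPathsRel {V : Type*} [DecidableEq V] (G : SimpleGraph V) (T : Finset V) (d : V)
    (m : ℕ) : (V ⊕ ({v // v ∈ T.erase d} × Fin m)) →
      (V ⊕ ({v // v ∈ T.erase d} × Fin m)) → Prop :=
  fun a b =>
    match a, b with
    | Sum.inl u, Sum.inl v => G.Adj u v
    | Sum.inl u, Sum.inr (t, j) => u = (t : V) ∧ (j : ℕ) = 0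
    | Sum.inr (t, i), Sum.inr (t', j) => t = t' ∧ (j : ℕ) = (i : ℕ) + 1
    | _, _ => False

/-- The graph `G'` obtained from `G` by attaching to each vertex of `T \ {d}` a new
pendant path with `m` edges. -/
def attachPaths {V : Type*} [DecidableEq V] (G : SimpleGraph V) (T : Finset V) (d : V)
    (m : ℕ) : SimpleGraph (V ⊕ ({v // v ∈ T.erase d} × Fin m)) :=
  SimpleGraph.fromRel (attachPathsRel G T d m)


open SimpleGraph Sum

lemma verts_closure {V : Type} [Fintype V] {G : SimpleGraph V}
    {S : G.Subgraph}
    (hcl : ∀ u v, G.Adj u v → u ∈ S.verts → s(u,v) ∈ S.edgeSet) :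
    ∀ {a b : V}, G.Walk a b → a ∈ S.verts → b ∈ S.verts := by
  intro a b w
  induction w with
  | nil => exact id
  | cons h p ih =>
      intro ha
      exact ih (S.edge_vert (Subgraph.mem_edgeSet.mp (hcl _ _ h ha)).symm)

lemma grow_step {V : Type} [Fintype V] {G : SimpleGraph V} [DecidableRel G.Adj]
    (hG : G.Connected) {x : ℕ} (hx : x ≤ G.edgeFinset.card)
    {S : G.Subgraph} (hS : S.Connected) (hlt : S.edgeSet.ncard < x) :
    ∃ u v, ∃ _h : G.Adj u v, u ∈ S.verts ∧ s(u,v) ∉ S.edgeSet := by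
  by_contra hno
  push_neg at hno
  have hcl : ∀ u v, G.Adj u v → u ∈ S.verts → s(u,v) ∈ S.edgeSet := by
    intro u v h hu
    by_contra hne
    exact hne (by_contra fun hh => hh (hno u v h hu))
  obtain ⟨u0, hu0⟩ := hS.nonempty
  have hall : ∀ v : V, v ∈ S.verts := by
    intro v
    obtain ⟨w⟩ := hG.preconnected u0 v
    exact verts_closure hcl w hu0
  have hsub : G.edgeSet ⊆ S.edgeSet := by
    intro e he
    induction e with
    | _ u v => exact hcl u v he (hall u)
  have h1 : G.edgeSet.ncard ≤ S.edgeSet.ncard :=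
    Set.ncard_le_ncard hsub (S.edgeSet.toFinite)
  rw [Set.ncard_eq_toFinset_card' _] at h1
  simp only [Set.toFinset_card] at h1
  have : G.edgeFinset.card = Fintype.card G.edgeSet := by
    rw [edgeFinset, Set.toFinset_card]
  omega

lemma grow_aux {V : Type} [Fintype V] [DecidableEq V] {G : SimpleGraph V} [DecidableRel G.Adj]
    (hG : G.Connected) {x : ℕ} (hx : x ≤ G.edgeFinset.card) :
    ∀ k (S : G.Subgraph), S.Connected → S.edgeSet.ncard ≤ x → x - S.edgeSet.ncard = k →
    ∃ S' : G.Subgraph, S ≤ S' ∧ S'.Connected ∧ S'.edgeSet.ncard = x := by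
  intro k
  induction k with
  | zero =>
      intro S hS hle hk
      exact ⟨S, le_refl _, hS, by omega⟩
  | succ k ih =>
      intro S hS hle hk
      have hlt : S.edgeSet.ncard < x := by omega
      obtain ⟨u, v, h, hu, hne⟩ := grow_step hG hx hS hlt
      set S' := S ⊔ G.subgraphOfAdj h with hS'
      have hconn : S'.Connected :=
        Subgraph.connected_sup hS.preconnected (SimpleGraph.Subgraph.subgraphOfAdj_connected h).preconnected ⟨u, hu, by simp⟩
      have hcard : S'.edgeSet.ncard = S.edgeSet.ncard + 1 := by
        rw [hS', Subgraph.edgeSet_sup, G.edgeSet_subgraphOfAdj h]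
        rw [Set.union_singleton, Set.ncard_insert_of_notMem hne S.edgeSet.toFinite]
      obtain ⟨S'', hle'', hconn'', hcard''⟩ := ih S' hconn (by omega) (by omega)
      exact ⟨S'', le_trans le_sup_left hle'', hconn'', hcard''⟩

lemma grow {V : Type} [Fintype V] [DecidableEq V] {G : SimpleGraph V} [DecidableRel G.Adj]
    (hG : G.Connected) {x : ℕ} (hx : x ≤ G.edgeFinset.card)
    {S : G.Subgraph} (hS : S.Connected) (hle : S.edgeSet.ncard ≤ x) :
    ∃ S' : G.Subgraph, S ≤ S' ∧ S'.Connected ∧ S'.edgeSet.ncard = x :=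
  grow_aux hG hx _ S hS hle rfl

section AP

variable {V : Type} [DecidableEq V] {G : SimpleGraph V} {T : Finset V} {d : V} {m : ℕ}

local notation "VG" => V ⊕ ({v // v ∈ T.erase d} × Fin m)

lemma ap_adj_inl_inl {u v : V} :
    (attachPaths G T d m).Adj (inl u) (inl v) ↔ G.Adj u v := by
  simp only [attachPaths, fromRel_adj, attachPathsRel]
  constructor
  · rintro ⟨-, h | h⟩; exact h; exact h.symm
  · intro h; exact ⟨by simp [h.ne], Or.inl h⟩

lemma ap_adj_inl_inr {u : V} {t : {v // v ∈ T.erase d}} {j : Fin m} :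
    (attachPaths G T d m).Adj (inl u) (inr (t, j)) ↔ (u = (t : V) ∧ (j : ℕ) = 0) := by
  simp only [attachPaths, fromRel_adj, attachPathsRel]
  constructor
  · rintro ⟨-, h | h⟩; exact h; exact h.elim
  · intro h; exact ⟨by simp, Or.inl h⟩

lemma ap_adj_inr_inr {t t' : {v // v ∈ T.erase d}} {i j : Fin m} :
    (attachPaths G T d m).Adj (inr (t, i)) (inr (t', j)) ↔
      (t = t' ∧ ((j : ℕ) = (i : ℕ) + 1 ∨ (i : ℕ) = (j : ℕ) + 1)) := by
  simp only [attachPaths, fromRel_adj, attachPathsRel]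
  constructor
  · rintro ⟨-, ⟨h1, h2⟩ | ⟨h1, h2⟩⟩
    · exact ⟨h1, Or.inl h2⟩
    · exact ⟨h1.symm, Or.inr h2⟩
  · rintro ⟨rfl, h | h⟩
    · refine ⟨?_, Or.inl ⟨rfl, h⟩⟩
      simp only [ne_eq, inr.injEq, Prod.mk.injEq, true_and]
      intro he; rw [he] at h; omega
    · refine ⟨?_, Or.inr ⟨rfl, h⟩⟩
      simp only [ne_eq, inr.injEq, Prod.mk.injEq, true_and]
      intro he; rw [he] at h; omega

lemma ap_adj_inr_inl {u : V} {t : {v // v ∈ T.erase d}} {j : Fin m} :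
    (attachPaths G T d m).Adj (inr (t, j)) (inl u) ↔ (u = (t : V) ∧ (j : ℕ) = 0) := by
  rw [(attachPaths G T d m).adj_comm, ap_adj_inl_inr]

/-- The level of a vertex relative to the pendant path at `t`. -/
def lvl (t : {v // v ∈ T.erase d}) : VG → ℕ :=
  Sum.elim (fun _ => 0) (fun p => if p.1 = t then (p.2 : ℕ) + 1 else 0)

/-- The lower endpoint of the `j`-th edge of the pendant path at `t`. -/
def pprev (t : {v // v ∈ T.erase d}) (j : Fin m) : VG :=
  if h : (j : ℕ) = 0 then inl (t : V)
  else inr (t, ⟨(j : ℕ) - 1, lt_of_le_of_lt (Nat.pred_le _) j.2⟩)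

/-- The `j`-th edge of the pendant path at `t`. -/
def pedge (t : {v // v ∈ T.erase d}) (j : Fin m) : Sym2 VG :=
  s(pprev t j, inr (t, j))

lemma pedge_adj (t : {v // v ∈ T.erase d}) (j : Fin m) :
    (attachPaths G T d m).Adj (pprev t j) (inr (t, j)) := by
  unfold pprev
  split
  · rw [ap_adj_inl_inr]; exact ⟨rfl, by omega⟩
  · rw [ap_adj_inr_inr]
    exact ⟨rfl, Or.inl (by simp; omega)⟩

lemma lvl_inr (t : {v // v ∈ T.erase d}) (j : Fin m) :
    lvl t (inr (t, j) : VG) = (j : ℕ) + 1 := by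
  simp [lvl]

lemma lvl_pprev (t : {v // v ∈ T.erase d}) (j : Fin m) : lvl t (pprev t j) = (j : ℕ) := by
  unfold pprev
  split
  · simp only [lvl, Sum.elim_inl]; omega
  · rw [lvl_inr]; simp; omega

lemma adj_lvl {t : {v // v ∈ T.erase d}} {a b : VG}
    (h : (attachPaths G T d m).Adj a b) : lvl t b ≤ lvl t a + 1 := by
  match a, b with
  | inl u, inl v => simp [lvl]
  | inl u, inr (t', j) =>
      rw [ap_adj_inl_inr] at h
      simp only [lvl, Sum.elim_inl, Sum.elim_inr]
      split <;> omega
  | inr (t', j), inl v => simp [lvl]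
  | inr (t', i), inr (t'', j) =>
      rw [ap_adj_inr_inr] at h
      obtain ⟨rfl, h | h⟩ := h <;> simp only [lvl, Sum.elim_inr] <;> split <;> omega

lemma adj_step {t : {v // v ∈ T.erase d}} {a b : VG} {j : Fin m}
    (h : (attachPaths G T d m).Adj a b) (hja : lvl t a = (j : ℕ))
    (hjb : lvl t b = (j : ℕ) + 1) : s(a, b) = pedge t j := by
  match a, b with
  | inl u, inl v => simp [lvl] at hjb
  | inl u, inr (t', i) =>
      rw [ap_adj_inl_inr] at h
      obtain ⟨rfl, hi0⟩ := h
      simp only [lvl, Sum.elim_inl, Sum.elim_inr] at hja hjb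
      split at hjb
      · rename_i ht
        have hj0 : (j : ℕ) = 0 := by omega
        have hij : i = j := Fin.val_injective (by omega)
        rw [pedge, pprev, dif_pos hj0, ht, hij]
      · omega
  | inr (t', i), inl v => simp only [lvl, Sum.elim_inl] at hjb; omega
  | inr (t', i), inr (t'', i') =>
      rw [ap_adj_inr_inr] at h
      obtain ⟨rfl, hii⟩ := h
      simp only [lvl, Sum.elim_inr] at hja hjb
      split at hjb
      · rename_i ht
        subst ht
        rw [if_pos rfl] at hja
        have hj0 : ¬ (j : ℕ) = 0 := by omega
        have h1 : i' = j := Fin.val_injective (by omega)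
        have h2 : i = ⟨(j : ℕ) - 1, lt_of_le_of_lt (Nat.pred_le _) j.2⟩ :=
          Fin.val_injective (by simp; omega)
        subst h1; subst h2
        rw [pedge, pprev, dif_neg hj0]
      · rw [if_neg (by assumption)] at hja; omega


lemma walk_pedge {H : (attachPaths G T d m).Subgraph} {a b : H.verts}
    (w : H.coe.Walk a b) (t : {v // v ∈ T.erase d}) (j : Fin m)
    (hja : lvl t a.1 ≤ (j : ℕ)) (hjb : (j : ℕ) < lvl t b.1) :
    pedge t j ∈ H.edgeSet := by
  induction w with
  | nil => omega
  | @cons x y z h p ih =>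
      rw [SimpleGraph.Subgraph.coe_adj] at h
      by_cases hc : lvl t y.1 ≤ (j : ℕ)
      · exact ih hc hjb
      · have h2 : lvl t y.1 ≤ lvl t x.1 + 1 := adj_lvl (H.adj_sub h)
        have hx : lvl t x.1 = (j : ℕ) := by omega
        have hy : lvl t y.1 = (j : ℕ) + 1 := by omega
        rw [← adj_step (H.adj_sub h) hx hy]
        exact SimpleGraph.Subgraph.mem_edgeSet.mpr h

lemma reach_pedge {H : (attachPaths G T d m).Subgraph} (hH : H.Connected)
    (hd : inl d ∈ H.verts) {t : {v // v ∈ T.erase d}} {i : Fin m}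
    (hi : inr (t, i) ∈ H.verts) (j : Fin m) (hj : (j : ℕ) ≤ (i : ℕ)) :
    pedge t j ∈ H.edgeSet := by
  obtain ⟨w⟩ := hH ⟨inl d, hd⟩ ⟨inr (t, i), hi⟩
  exact walk_pedge w t j (by simp [lvl]) (by rw [lvl_inr]; omega)

lemma pedge_zero (t : {v // v ∈ T.erase d}) (h0 : 0 < m) :
    pedge t ⟨0, h0⟩ = s(inl (t : V), inr (t, ⟨0, h0⟩)) := by
  rw [pedge, pprev, dif_pos rfl]

lemma inl_mem_of_inr_mem {H : (attachPaths G T d m).Subgraph} (hH : H.Connected)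
    (hd : inl d ∈ H.verts) {t : {v // v ∈ T.erase d}} {i : Fin m}
    (hi : inr (t, i) ∈ H.verts) : inl (t : V) ∈ H.verts := by
  have h0 : 0 < m := lt_of_le_of_lt (Nat.zero_le _) i.2
  have := reach_pedge hH hd hi ⟨0, h0⟩ (by simp)
  rw [pedge_zero t h0, SimpleGraph.Subgraph.mem_edgeSet] at this
  exact this.fst_mem

/-- Projection to the original vertex set. -/
def pproj : VG → V := Sum.elim id (fun p => (p.1 : V))

/-- The trace on `G` of a subgraph of the augmented graph. -/
def traceSub (H : (attachPaths G T d m).Subgraph) : G.Subgraph where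
  verts := {v | inl v ∈ H.verts}
  Adj u v := H.Adj (inl u) (inl v)
  adj_sub h := ap_adj_inl_inl.mp (H.adj_sub h)
  edge_vert h := h.fst_mem
  symm := ⟨fun u v h => h.symm⟩

lemma walk_proj {H : (attachPaths G T d m).Subgraph} :
    ∀ {a b : H.verts} (_w : H.coe.Walk a b), pproj a.1 ∈ (traceSub H).verts →
      pproj b.1 ∈ (traceSub H).verts ∧
        Relation.ReflTransGen (traceSub H).Adj (pproj a.1) (pproj b.1) := by
  intro a b w
  induction w with
  | nil => exact fun h => ⟨h, Relation.ReflTransGen.refl⟩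
  | @cons x y z h p ih =>
      intro hx
      rw [SimpleGraph.Subgraph.coe_adj] at h
      obtain ⟨xa, hxa⟩ := x
      obtain ⟨ya, hya⟩ := y
      have key : pproj ya ∈ (traceSub H).verts ∧
          Relation.ReflTransGen (traceSub H).Adj (pproj xa) (pproj ya) := by
        match xa, ya with
        | inl u, inl v =>
            refine ⟨h.snd_mem, Relation.ReflTransGen.single ?_⟩
            exact h
        | inl u, inr (t, jj) =>
            obtain ⟨rfl, -⟩ := ap_adj_inl_inr.mp (H.adj_sub h)
            exact ⟨hx, Relation.ReflTransGen.refl⟩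
        | inr (t, jj), inl u =>
            obtain ⟨rfl, -⟩ := ap_adj_inr_inl.mp (H.adj_sub h)
            exact ⟨hx, Relation.ReflTransGen.refl⟩
        | inr (t, i), inr (t', jj) =>
            obtain ⟨rfl, -⟩ := ap_adj_inr_inr.mp (H.adj_sub h)
            exact ⟨hx, Relation.ReflTransGen.refl⟩
      obtain ⟨hz, hrtg⟩ := ih key.1
      exact ⟨hz, key.2.trans hrtg⟩

lemma pprev_eq_inr {t t'' : {v // v ∈ T.erase d}} {j i : Fin m}
    (h : pprev t j = inr (t'', i)) :
    t'' = t ∧ (i : ℕ) = (j : ℕ) - 1 ∧ (j : ℕ) ≠ 0 := by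
  rw [pprev] at h
  split at h
  · exact absurd h (by simp)
  · rw [inr.injEq, Prod.mk.injEq] at h
    refine ⟨h.1.symm, ?_, by assumption⟩
    rw [← h.2]

lemma pedge_injective :
    Function.Injective (fun p : ({v // v ∈ T.erase d} × Fin m) =>
      (pedge p.1 p.2 : Sym2 VG)) := by
  rintro ⟨t, j⟩ ⟨t', j'⟩ h
  simp only [pedge, Sym2.eq_iff] at h
  obtain ⟨h1, h2⟩ | ⟨h1, h2⟩ := h
  · rw [inr.injEq, Prod.mk.injEq] at h2
    exact Prod.ext h2.1 h2.2
  · obtain ⟨e1, e2, e3⟩ := pprev_eq_inr h1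
    obtain ⟨f1, f2, f3⟩ := pprev_eq_inr h2.symm
    exfalso
    omega

/-- The set of pendant path edges. -/
def PE : Set (Sym2 VG) :=
  Set.range (fun p : ({v // v ∈ T.erase d} × Fin m) => pedge p.1 p.2)

/-- The set of original edges in the augmented graph. -/
def AE (G : SimpleGraph V) (T : Finset V) (d : V) (m : ℕ) :
    Set (Sym2 (V ⊕ ({v // v ∈ T.erase d} × Fin m))) :=
  Sym2.map inl '' G.edgeSet

lemma pedge_ne_inl_inl {t : {v // v ∈ T.erase d}} {j : Fin m} {u v : V} :
    pedge t j ≠ s(inl u, inl v) := by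
  intro h
  rw [pedge, Sym2.eq_iff] at h
  obtain ⟨-, h⟩ | ⟨-, h⟩ := h <;> simp at h

lemma mem_AE_iff {e : Sym2 VG} :
    e ∈ AE G T d m ↔ ∃ u v : V, G.Adj u v ∧ e = s(inl u, inl v) := by
  constructor
  · rintro ⟨e', he', rfl⟩
    induction e' with
    | _ u v => exact ⟨u, v, he', by rw [Sym2.map_pair_eq]⟩
  · rintro ⟨u, v, h, rfl⟩
    exact ⟨s(u, v), h, by rw [Sym2.map_pair_eq]⟩

lemma disjoint_AE_PE : Disjoint (AE G T d m) (PE : Set (Sym2 VG)) := by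
  rw [Set.disjoint_left]
  rintro e he hpe
  obtain ⟨u, v, -, rfl⟩ := mem_AE_iff.mp he
  obtain ⟨⟨t, j⟩, hp⟩ := hpe
  exact pedge_ne_inl_inl hp

lemma AE_subset_edgeSet : AE G T d m ⊆ (attachPaths G T d m).edgeSet := by
  intro e he
  obtain ⟨u, v, h, rfl⟩ := mem_AE_iff.mp he
  rw [SimpleGraph.mem_edgeSet]
  exact ap_adj_inl_inl.mpr h

lemma PE_subset_edgeSet : (PE : Set (Sym2 VG)) ⊆ (attachPaths G T d m).edgeSet := by
  rintro e ⟨⟨t, j⟩, rfl⟩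
  exact (SimpleGraph.mem_edgeSet _).mpr (pedge_adj t j)

lemma edgeSet_eq_AE_union_PE :
    (attachPaths G T d m).edgeSet = AE G T d m ∪ (PE : Set (Sym2 VG)) := by
  apply Set.Subset.antisymm
  · intro e he
    induction e with
    | _ a b =>
        rw [SimpleGraph.mem_edgeSet] at he
        match a, b with
        | inl u, inl v =>
            exact Or.inl (mem_AE_iff.mpr ⟨u, v, ap_adj_inl_inl.mp he, rfl⟩)
        | inl u, inr (t, j) =>
            obtain ⟨rfl, hj⟩ := ap_adj_inl_inr.mp he
            refine Or.inr ⟨(t, j), ?_⟩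
            show pedge t j = _
            rw [pedge, pprev, dif_pos hj]
        | inr (t, j), inl u =>
            obtain ⟨rfl, hj⟩ := ap_adj_inr_inl.mp he
            refine Or.inr ⟨(t, j), ?_⟩
            show pedge t j = _
            rw [pedge, pprev, dif_pos hj, Sym2.eq_swap]
        | inr (t, i), inr (t', j) =>
            obtain ⟨rfl, hij | hij⟩ := ap_adj_inr_inr.mp he
            · refine Or.inr ⟨(t, j), ?_⟩
              show pedge t j = _
              rw [pedge, pprev, dif_neg (by omega)]
              have hi : i = ⟨(j : ℕ) - 1, lt_of_le_of_lt (Nat.pred_le _) j.2⟩ :=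
                Fin.val_injective (by simp; omega)
              rw [hi]
            · refine Or.inr ⟨(t, i), ?_⟩
              show pedge t i = _
              rw [pedge, pprev, dif_neg (by omega)]
              have hj : j = ⟨(i : ℕ) - 1, lt_of_le_of_lt (Nat.pred_le _) i.2⟩ :=
                Fin.val_injective (by simp; omega)
              rw [hj, Sym2.eq_swap]
  · exact Set.union_subset AE_subset_edgeSet PE_subset_edgeSet

lemma rtg_reachable {W : Type} {G' : SimpleGraph W} (S : G'.Subgraph) {u v : W}
    (h : Relation.ReflTransGen S.Adj u v) (hu : u ∈ S.verts) :
    ∀ hv : v ∈ S.verts, S.coe.Reachable ⟨u, hu⟩ ⟨v, hv⟩ := by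
  induction h with
  | refl => intro hv; exact SimpleGraph.Reachable.refl _
  | tail _ hadj ih =>
      intro hv
      exact (ih hadj.fst_mem).trans
        (SimpleGraph.Adj.reachable (by rw [SimpleGraph.Subgraph.coe_adj]; exact hadj))

lemma traceSub_connected {H : (attachPaths G T d m).Subgraph} (hH : H.Connected)
    (hd : inl d ∈ H.verts) : (traceSub H).Connected := by
  rw [SimpleGraph.Subgraph.connected_iff]
  refine ⟨⟨?_⟩, ⟨d, hd⟩⟩
  rintro ⟨u, hu⟩ ⟨v, hv⟩
  obtain ⟨w⟩ := hH ⟨inl u, hu⟩ ⟨inl v, hv⟩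
  obtain ⟨hv', hrtg⟩ := walk_proj w hu
  exact rtg_reachable (traceSub H) hrtg hu hv

/-- The copy of a subgraph of `G` inside the augmented graph. -/
def inlSub (S : G.Subgraph) : (attachPaths G T d m).Subgraph where
  verts := inl '' S.verts
  Adj a b := ∃ u v : V, S.Adj u v ∧ a = inl u ∧ b = inl v
  adj_sub := by
    rintro a b ⟨u, v, h, rfl, rfl⟩
    exact ap_adj_inl_inl.mpr (S.adj_sub h)
  edge_vert := by
    rintro a b ⟨u, v, h, rfl, rfl⟩
    exact ⟨u, h.fst_mem, rfl⟩
  symm := by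
    constructor
    rintro a b ⟨u, v, h, rfl, rfl⟩
    exact ⟨v, u, h.symm, rfl, rfl⟩

lemma inlSub_edgeSet (S : G.Subgraph) :
    (inlSub S : (attachPaths G T d m).Subgraph).edgeSet = Sym2.map inl '' S.edgeSet := by
  ext e
  constructor
  · intro he
    induction e with
    | _ a b =>
        rw [SimpleGraph.Subgraph.mem_edgeSet] at he
        obtain ⟨u, v, h, rfl, rfl⟩ := he
        exact ⟨s(u, v), h, by rw [Sym2.map_pair_eq]⟩
  · rintro ⟨e', he', rfl⟩
    induction e' with
    | _ u v =>
        rw [Sym2.map_pair_eq, SimpleGraph.Subgraph.mem_edgeSet]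
        exact ⟨u, v, he', rfl, rfl⟩

lemma inlSub_reachable {S : G.Subgraph} (hS : S.Connected) {u v : V}
    (hu : u ∈ S.verts) (hv : v ∈ S.verts) :
    (inlSub S : (attachPaths G T d m).Subgraph).coe.Reachable
      ⟨inl u, ⟨u, hu, rfl⟩⟩ ⟨inl v, ⟨v, hv, rfl⟩⟩ := by
  let hmap : S.coe →g (inlSub S : (attachPaths G T d m).Subgraph).coe :=
    ⟨fun p => ⟨inl p.1, ⟨p.1, p.2, rfl⟩⟩, fun {a b} hab => ⟨a.1, b.1, hab, rfl, rfl⟩⟩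
  exact SimpleGraph.Reachable.map hmap (hS.coe ⟨u, hu⟩ ⟨v, hv⟩)

/-- The subgraph of the augmented graph consisting of all pendant path edges. -/
def pendSub (G : SimpleGraph V) (T : Finset V) (d : V) (m : ℕ) :
    (attachPaths G T d m).Subgraph where
  verts := (inl '' ((T.erase d : Finset V) : Set V)) ∪ Set.range inr
  Adj a b := (attachPaths G T d m).Adj a b ∧ (a.isRight ∨ b.isRight)
  adj_sub h := h.1
  edge_vert := by
    rintro a b ⟨h, hr | hr⟩
    · match a with
      | inl u => simp at hr
      | inr p => exact Or.inr ⟨p, rfl⟩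
    · match a, b with
      | inl u, inr (t, j) =>
          obtain ⟨rfl, -⟩ := ap_adj_inl_inr.mp h
          exact Or.inl ⟨(t : V), t.2, rfl⟩
      | inr p, inr q => exact Or.inr ⟨p, rfl⟩
      | inl u, inl v => simp at hr
  symm := by
    constructor
    rintro a b ⟨h, hr⟩
    exact ⟨h.symm, hr.symm⟩

lemma pendSub_edgeSet : (pendSub G T d m).edgeSet = (PE : Set (Sym2 VG)) := by
  ext e
  constructor
  · intro he
    induction e with
    | _ a b =>
        rw [SimpleGraph.Subgraph.mem_edgeSet] at he
        obtain ⟨h, hr⟩ := he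
        have := edgeSet_eq_AE_union_PE (G := G) (T := T) (d := d) (m := m) ▸
          (SimpleGraph.mem_edgeSet _).mpr h
        obtain hA | hP := this
        · exfalso
          obtain ⟨u, v, -, huv⟩ := mem_AE_iff.mp hA
          rw [Sym2.eq_iff] at huv
          obtain ⟨rfl, rfl⟩ | ⟨rfl, rfl⟩ := huv <;> simp at hr
        · exact hP
  · rintro ⟨⟨t, j⟩, rfl⟩
    show pedge t j ∈ _
    rw [pedge, SimpleGraph.Subgraph.mem_edgeSet]
    refine ⟨pedge_adj t j, Or.inr rfl⟩

lemma mem_pendSub_verts_inr (p : {v // v ∈ T.erase d} × Fin m) :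
    (inr p : VG) ∈ (pendSub G T d m).verts := Or.inr ⟨p, rfl⟩

lemma mem_pendSub_verts_inl (t : {v // v ∈ T.erase d}) :
    (inl (t : V) : VG) ∈ (pendSub G T d m).verts := Or.inl ⟨(t : V), t.2, rfl⟩

section Counting

variable [Fintype V]

lemma PE_ncard (hd : d ∈ T) : (PE : Set (Sym2 VG)).ncard = (T.card - 1) * m := by
  rw [PE, ← Set.image_univ, Set.ncard_image_of_injective _ pedge_injective,
    Set.ncard_univ, Nat.card_eq_fintype_card, Fintype.card_prod, Fintype.card_fin,
    Fintype.card_coe, Finset.card_erase_of_mem hd]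

lemma AE_ncard [DecidableRel G.Adj] : (AE G T d m).ncard = G.edgeFinset.card := by
  rw [AE, Set.ncard_image_of_injective _ (Sym2.map.injective inl_injective),
    Set.ncard_eq_toFinset_card']
  rfl

end Counting

lemma pprev_mem_pendSub_verts (t : {v // v ∈ T.erase d}) (j : Fin m) :
    pprev t j ∈ (pendSub G T d m).verts := by
  rw [pprev]
  split
  · exact mem_pendSub_verts_inl t
  · exact mem_pendSub_verts_inr _

lemma fwd_connected {S : G.Subgraph} (hS : S.Connected) (hdT : d ∈ T)
    (hTS : (T : Set V) ⊆ S.verts) :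
    (pendSub G T d m ⊔ inlSub S).Connected := by
  set K := pendSub G T d m ⊔ inlSub S with hK
  have hdm : (inl d : VG) ∈ K.verts := Or.inr ⟨d, hTS hdT, rfl⟩
  have hA : ∀ u (hu : u ∈ S.verts),
      K.coe.Reachable ⟨inl u, Or.inr ⟨u, hu, rfl⟩⟩ ⟨inl d, hdm⟩ := by
    intro u hu
    exact SimpleGraph.Reachable.map
      (SimpleGraph.Subgraph.inclusion (le_sup_right : inlSub S ≤ K))
      (inlSub_reachable hS hu (hTS hdT))
  have hstep : ∀ (t : {v // v ∈ T.erase d}) (j : Fin m),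
      K.coe.Reachable ⟨inr (t, j), Or.inl (mem_pendSub_verts_inr (t, j))⟩
        ⟨pprev t j, Or.inl (pprev_mem_pendSub_verts t j)⟩ := by
    intro t j
    refine SimpleGraph.Adj.reachable ?_
    rw [SimpleGraph.Subgraph.coe_adj]
    exact (le_sup_left : pendSub G T d m ≤ K).2 ⟨(pedge_adj t j).symm, Or.inl rfl⟩
  have hB : ∀ n (t : {v // v ∈ T.erase d}) (j : Fin m), (j : ℕ) ≤ n →
      K.coe.Reachable ⟨inr (t, j), Or.inl (mem_pendSub_verts_inr (t, j))⟩
        ⟨inl d, hdm⟩ := by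
    intro n
    induction n with
    | zero =>
        intro t j hj
        have hp : pprev t j = inl (t : V) := by rw [pprev, dif_pos (by omega)]
        have he : (⟨pprev t j, Or.inl (pprev_mem_pendSub_verts t j)⟩ : K.verts) =
            ⟨inl (t : V), Or.inr ⟨(t : V), hTS (Finset.erase_subset d T t.2), rfl⟩⟩ :=
          Subtype.ext hp
        have hs := hstep t j
        rw [he] at hs
        exact hs.trans (hA (t : V) (hTS (Finset.erase_subset d T t.2)))
    | succ n ih =>
        intro t j hj
        by_cases h0 : (j : ℕ) = 0
        · have hp : pprev t j = inl (t : V) := by rw [pprev, dif_pos h0]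
          have he : (⟨pprev t j, Or.inl (pprev_mem_pendSub_verts t j)⟩ : K.verts) =
              ⟨inl (t : V), Or.inr ⟨(t : V), hTS (Finset.erase_subset d T t.2), rfl⟩⟩ :=
            Subtype.ext hp
          have hs := hstep t j
          rw [he] at hs
          exact hs.trans (hA (t : V) (hTS (Finset.erase_subset d T t.2)))
        · have hp : pprev t j =
              inr (t, ⟨(j : ℕ) - 1, lt_of_le_of_lt (Nat.pred_le _) j.2⟩) := by
            rw [pprev, dif_neg h0]
          have he : (⟨pprev t j, Or.inl (pprev_mem_pendSub_verts t j)⟩ : K.verts) =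
              ⟨inr (t, ⟨(j : ℕ) - 1, lt_of_le_of_lt (Nat.pred_le _) j.2⟩),
                Or.inl (mem_pendSub_verts_inr _)⟩ :=
            Subtype.ext hp
          have hs := hstep t j
          rw [he] at hs
          exact hs.trans (ih t _ (by exact (by omega : (j : ℕ) - 1 ≤ n)))
  rw [SimpleGraph.Subgraph.connected_iff', SimpleGraph.connected_iff_exists_forall_reachable]
  refine ⟨⟨inl d, hdm⟩, ?_⟩
  rintro ⟨a, ha⟩
  match a, ha with
  | inl u, ha =>
      have hu : u ∈ S.verts := by
        obtain ha | ha := ha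
        · obtain ⟨w, hw, hweq⟩ | ⟨p, hp⟩ := ha
          · rw [inl.injEq] at hweq
            exact hweq ▸ hTS (Finset.erase_subset d T hw)
          · exact absurd hp (by simp)
        · obtain ⟨w, hw, hweq⟩ := ha
          rw [inl.injEq] at hweq
          exact hweq ▸ hw
      exact (hA u hu).symm
  | inr (t, j), ha => exact (hB (j : ℕ) t j le_rfl).symm

end AP

/-- Reduction of the Steiner tree problem to planar graph cutting: `G` contains a
connected subgraph `S` with `T ⊆ V(S)` and at most `x` edges if and only if the graph
`G'` obtained by attaching to each terminal in `T \ {d}` a pendant path with `|E(G)|`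
edges can be covered by two connected subgraphs `G₁, G₂` containing `d` with exactly
`(|T| - 1) * |E(G)| + x` and `|E(G)|` edges, respectively. -/
theorem steiner_iff_graph_cutting {V : Type} [Fintype V] [DecidableEq V]
    (G : SimpleGraph V) [DecidableRel G.Adj] (hG : G.Connected)
    (T : Finset V) (d : V) (hd : d ∈ T) (hT : 2 ≤ T.card)
    (m : ℕ) (hm : m = G.edgeFinset.card)
    (x : ℕ) (hx1 : 1 ≤ x) (hx2 : x ≤ m) :
    (∃ S : G.Subgraph, S.Connected ∧ (T : Set V) ⊆ S.verts ∧ S.edgeSet.ncard ≤ x) ↔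
    (∃ G₁ G₂ : (attachPaths G T d m).Subgraph,
      G₁.Connected ∧ G₂.Connected ∧
      Sum.inl d ∈ G₁.verts ∧ Sum.inl d ∈ G₂.verts ∧
      G₁.edgeSet.ncard = (T.card - 1) * m + x ∧
      G₂.edgeSet.ncard = m ∧
      G₁.edgeSet ∪ G₂.edgeSet = (attachPaths G T d m).edgeSet) := by
  have hm1 : 1 ≤ m := le_trans hx1 hx2
  constructor
  · rintro ⟨S0, hS0conn, hTS0, hS0card⟩
    obtain ⟨S, hle, hSconn, hScard⟩ := grow hG (hm ▸ hx2) hS0conn hS0card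
    have hTS : (T : Set V) ⊆ S.verts := fun v hv => hle.1 (hTS0 hv)
    have htop : (⊤ : G.Subgraph).Connected :=
      ⟨SimpleGraph.Subgraph.topIso.connected_iff.mpr hG⟩
    have hdS : d ∈ S.verts := hTS (Finset.mem_coe.mpr hd)
    have hmapinj : Function.Injective (Sym2.map (inl : V → V ⊕ ({v // v ∈ T.erase d} × Fin m))) :=
      Sym2.map.injective inl_injective
    refine ⟨pendSub G T d m ⊔ inlSub S, inlSub ⊤, fwd_connected hSconn hd hTS,
      ?_, Or.inr ⟨d, hdS, rfl⟩, ⟨d, trivial, rfl⟩, ?_, ?_, ?_⟩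
    · rw [SimpleGraph.Subgraph.connected_iff]
      refine ⟨⟨?_⟩, ⟨inl d, ⟨d, trivial, rfl⟩⟩⟩
      rintro ⟨a, u, -, rfl⟩ ⟨b, v, -, rfl⟩
      exact inlSub_reachable htop trivial trivial
    · rw [SimpleGraph.Subgraph.edgeSet_sup, pendSub_edgeSet, inlSub_edgeSet,
        Set.ncard_union_eq (disjoint_AE_PE.symm.mono_right
          (Set.image_mono (SimpleGraph.Subgraph.edgeSet_subset S)))
          (Set.toFinite _) (Set.toFinite _),
        PE_ncard hd, Set.ncard_image_of_injective _ hmapinj, hScard]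
    · rw [inlSub_edgeSet, SimpleGraph.Subgraph.edgeSet_top,
        Set.ncard_image_of_injective _ hmapinj, Set.ncard_eq_toFinset_card', hm]
      rfl
    · rw [SimpleGraph.Subgraph.edgeSet_sup, pendSub_edgeSet, inlSub_edgeSet, inlSub_edgeSet,
        SimpleGraph.Subgraph.edgeSet_top, edgeSet_eq_AE_union_PE, Set.union_assoc,
        Set.union_eq_self_of_subset_left
          (Set.image_mono (SimpleGraph.Subgraph.edgeSet_subset S)),
        Set.union_comm]
      rfl
  · rintro ⟨G₁, G₂, hc1, hc2, hd1, hd2, hcard1, hcard2, hcover⟩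
    have hlast : ∀ t : {v // v ∈ T.erase d},
        pedge t ⟨m - 1, by omega⟩ ∈ G₁.edgeSet := by
      intro t
      have hmem : pedge t ⟨m - 1, by omega⟩ ∈ G₁.edgeSet ∪ G₂.edgeSet :=
        hcover ▸ PE_subset_edgeSet ⟨(t, ⟨m - 1, by omega⟩), rfl⟩
      obtain h1 | h2 := hmem
      · exact h1
      · exfalso
        have hv : (inr (t, ⟨m - 1, by omega⟩) : V ⊕ ({v // v ∈ T.erase d} × Fin m))
            ∈ G₂.verts := by
          rw [pedge, SimpleGraph.Subgraph.mem_edgeSet] at h2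
          exact h2.snd_mem
        have hall : Set.range (fun j : Fin m => pedge t j) ⊆ G₂.edgeSet := by
          rintro e ⟨j, rfl⟩
          refine reach_pedge hc2 hd2 hv j ?_
          show (j : ℕ) ≤ m - 1
          have := j.2; omega
        obtain ⟨w⟩ := hc2.coe ⟨inl d, hd2⟩ ⟨inr (t, ⟨m - 1, by omega⟩), hv⟩
        cases w with
        | cons h p =>
          rename_i y
          rw [SimpleGraph.Subgraph.coe_adj] at h
          match y, h with
          | ⟨inl v, hy⟩, h =>
              have he0 : s(inl d, inl v) ∈ G₂.edgeSet :=
                SimpleGraph.Subgraph.mem_edgeSet.mpr h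
              have hnotin : s((inl d : V ⊕ ({v // v ∈ T.erase d} × Fin m)), inl v)
                  ∉ Set.range (fun j : Fin m => pedge t j) := by
                rintro ⟨j, hj⟩
                exact pedge_ne_inl_inl hj
              have hins : insert s((inl d : V ⊕ ({v // v ∈ T.erase d} × Fin m)), inl v)
                  (Set.range (fun j : Fin m => pedge t j)) ⊆ G₂.edgeSet :=
                Set.insert_subset he0 hall
              have hrn : (Set.range (fun j : Fin m => pedge t j)).ncard = m := by
                have hinj : Function.Injective (fun j : Fin m => pedge t j) := by
                  intro i j hij
                  have := pedge_injective (a₁ := (t, i)) (a₂ := (t, j)) hij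
                  exact congrArg Prod.snd this
                rw [← Set.image_univ, Set.ncard_image_of_injective _ hinj,
                  Set.ncard_univ, Nat.card_eq_fintype_card, Fintype.card_fin]
              have hle := Set.ncard_le_ncard hins (Set.toFinite _)
              rw [Set.ncard_insert_of_notMem hnotin (Set.toFinite _), hrn, hcard2] at hle
              omega
          | ⟨inr (t', j'), hy⟩, h =>
              obtain ⟨heq, -⟩ := ap_adj_inl_inr.mp (G₂.adj_sub h)
              exact Finset.ne_of_mem_erase t'.2 heq.symm
    have hPE : (PE : Set (Sym2 (V ⊕ ({v // v ∈ T.erase d} × Fin m)))) ⊆ G₁.edgeSet := by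
      rintro e ⟨⟨t, j⟩, rfl⟩
      refine reach_pedge hc1 hd1
        ((SimpleGraph.Subgraph.mem_edgeSet.mp (hlast t)).snd_mem) j ?_
      show (j : ℕ) ≤ m - 1
      have := j.2; omega
    have hsplit : G₁.edgeSet = (G₁.edgeSet ∩ AE G T d m) ∪ PE := by
      apply Set.Subset.antisymm
      · intro e he
        have hthis := SimpleGraph.Subgraph.edgeSet_subset G₁ he
        rw [edgeSet_eq_AE_union_PE] at hthis
        obtain hA | hP := hthis
        · exact Or.inl ⟨he, hA⟩
        · exact Or.inr hP
      · exact Set.union_subset Set.inter_subset_left hPE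
    have hdisj : Disjoint (G₁.edgeSet ∩ AE G T d m)
        (PE : Set (Sym2 (V ⊕ ({v // v ∈ T.erase d} × Fin m)))) :=
      disjoint_AE_PE.mono_left Set.inter_subset_right
    rw [hsplit, Set.ncard_union_eq hdisj (Set.toFinite _) (Set.toFinite _), PE_ncard hd]
      at hcard1
    refine ⟨traceSub G₁, traceSub_connected hc1 hd1, ?_, ?_⟩
    · intro v hv
      by_cases hvd : v = d
      · exact hvd ▸ hd1
      · have hvT : v ∈ T.erase d := Finset.mem_erase.mpr ⟨hvd, hv⟩
        exact inl_mem_of_inr_mem hc1 hd1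
          ((SimpleGraph.Subgraph.mem_edgeSet.mp (hlast ⟨v, hvT⟩)).snd_mem)
    · have himg : Sym2.map inl '' (traceSub G₁).edgeSet ⊆ G₁.edgeSet ∩ AE G T d m := by
        rintro e ⟨e', he', rfl⟩
        induction e' with
        | _ u v =>
            rw [SimpleGraph.Subgraph.mem_edgeSet] at he'
            rw [Sym2.map_pair_eq]
            exact ⟨SimpleGraph.Subgraph.mem_edgeSet.mpr he',
              mem_AE_iff.mpr ⟨u, v, ap_adj_inl_inl.mp (G₁.adj_sub he'), rfl⟩⟩
      have := Set.ncard_le_ncard himg (Set.toFinite _)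
      rw [Set.ncard_image_of_injective _ (Sym2.map.injective inl_injective)] at this
      omega
end

section
/- Let n ≥ 1 and consider the star with vertex set {d, x, u_1, …, u_n} and edges {d, x} and {x, u_i} for 1 ≤ i ≤ n, with positive integer edge lengths α_0 = α({d,x}) and α_i = α({x,u_i}), and let W = α_1 + ⋯ + α_n. Then there exists a closed walk starting and ending at d in the symmetric orientation of the star that traverses each of the arcs (x, u_i) and (u_i, x) exactly once for every i, traverses each of the arcs (d, x) and (x, d) exactly twice, and in which the total length traversed between any two consecutive visits of d is at most W + 2α_0, if and only if there exists a subset I ⊆ {1, …, n} with ∑_{i∈I} α_i = W/2. -/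
/-- Adjacency of the star with vertices `0 = d`, `1 = x` (the center) and
`i + 2 = u_i` for `0 ≤ i < n`: edges `{d, x}` and `{x, u_i}`. -/
def starAdj (n u v : ℕ) : Prop :=
  (u = 0 ∧ v = 1) ∨ (u = 1 ∧ v = 0) ∨
  (u = 1 ∧ 2 ≤ v ∧ v < n + 2) ∨ (2 ≤ u ∧ u < n + 2 ∧ v = 1)

/-- Length of an arc of the symmetric orientation of the star: arcs between `d = 0`
and `x = 1` have length `α₀`; arcs between `x = 1` and `u_i = i + 2` have length `α i`. -/
def starArcLen (α₀ : ℕ) (α : ℕ → ℕ) (u v : ℕ) : ℕ :=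
  if u = 0 ∨ v = 0 then α₀ else if u = 1 then α (v - 2) else α (u - 2)

/-- The number of times the walk `w` (with `ℓ` arcs, `w j` being the `j`-th vertex)
traverses the arc `(a, b)`. -/
def countArc (w : ℕ → ℕ) (ℓ a b : ℕ) : ℕ :=
  ((Finset.range ℓ).filter fun j => w j = a ∧ w (j + 1) = b).card

namespace StarRoute

def tourSeg : List ℕ → List ℕ
  | [] => []
  | i :: t => (i + 2) :: 1 :: tourSeg t

def walkFn (V : List ℕ) (j : ℕ) : ℕ := V.getD j 0

@[simp] lemma tourSeg_nil : tourSeg [] = [] := rfl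
@[simp] lemma tourSeg_cons (i : ℕ) (t : List ℕ) :
    tourSeg (i :: t) = (i + 2) :: 1 :: tourSeg t := rfl

@[simp] lemma tourSeg_length (L : List ℕ) : (tourSeg L).length = 2 * L.length := by
  induction L with
  | nil => rfl
  | cons i t ih => simp [ih]; omega

lemma tourSeg_ne_zero {L : List ℕ} {x : ℕ} (hx : x ∈ tourSeg L) : x ≠ 0 := by
  induction L with
  | nil => simp at hx
  | cons i t ih =>
    simp only [tourSeg_cons, List.mem_cons] at hx
    rcases hx with h | h | h
    · omega
    · omega
    · exact ih h

@[simp] lemma walkFn_cons_succ (x : ℕ) (t : List ℕ) (j : ℕ) :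
    walkFn (x :: t) (j + 1) = walkFn t j := List.getD_cons_succ
@[simp] lemma walkFn_cons_zero (x : ℕ) (t : List ℕ) :
    walkFn (x :: t) 0 = x := List.getD_cons_zero

lemma countArc_zero (w : ℕ → ℕ) (a b : ℕ) : countArc w 0 a b = 0 := by
  simp [countArc]

lemma countArc_succ' (w : ℕ → ℕ) (ℓ a b : ℕ) :
    countArc w (ℓ + 1) a b =
      (if w 0 = a ∧ w 1 = b then 1 else 0) + countArc (fun j => w (j + 1)) ℓ a b := by
  simp only [countArc, Finset.card_filter, Finset.sum_range_succ']
  exact add_comm _ _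

lemma walkFn_shift (x : ℕ) (t : List ℕ) :
    (fun j => walkFn (x :: t) (j + 1)) = walkFn t := by
  funext j; simp


lemma countArc_cons (x : ℕ) (t : List ℕ) (ℓ a b : ℕ) :
    countArc (walkFn (x :: t)) (ℓ + 1) a b =
      (if x = a ∧ walkFn t 0 = b then 1 else 0) + countArc (walkFn t) ℓ a b := by
  rw [countArc_succ', walkFn_shift]
  simp

lemma cnt_block_to_leaf (L r : List ℕ) (i : ℕ) :
    countArc (walkFn ((1 :: tourSeg L) ++ 0 :: r)) (2 * L.length + (r.length + 1)) 1 (i + 2) =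
      L.count i + countArc (walkFn (0 :: r)) r.length 1 (i + 2) := by
  induction L with
  | nil =>
    simp only [tourSeg_nil, List.count_nil, List.length_nil, List.singleton_append,
      Nat.mul_zero, Nat.zero_add]
    rw [countArc_cons]
    simp
  | cons j t ih =>
    have h2 : 2 * (j :: t).length + (r.length + 1)
        = (2 * t.length + (r.length + 1)) + 1 + 1 := by simp; omega
    simp only [tourSeg_cons, List.cons_append] at ih ⊢
    rw [h2, countArc_cons, countArc_cons, ih]
    by_cases hji : j = i <;> simp [hji, List.count_cons] <;> omega

lemma cnt_block_from_leaf (L r : List ℕ) (i : ℕ) :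
    countArc (walkFn ((1 :: tourSeg L) ++ 0 :: r)) (2 * L.length + (r.length + 1)) (i + 2) 1 =
      L.count i + countArc (walkFn (0 :: r)) r.length (i + 2) 1 := by
  induction L with
  | nil =>
    simp only [tourSeg_nil, List.count_nil, List.length_nil, List.singleton_append,
      Nat.mul_zero, Nat.zero_add]
    rw [countArc_cons]
    simp
  | cons j t ih =>
    have h2 : 2 * (j :: t).length + (r.length + 1)
        = (2 * t.length + (r.length + 1)) + 1 + 1 := by simp; omega
    simp only [tourSeg_cons, List.cons_append] at ih ⊢
    rw [h2, countArc_cons, countArc_cons, ih]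
    by_cases hji : j = i <;> simp [hji, List.count_cons] <;> omega

lemma cnt_block_dx (L r : List ℕ) :
    countArc (walkFn ((1 :: tourSeg L) ++ 0 :: r)) (2 * L.length + (r.length + 1)) 0 1 =
      countArc (walkFn (0 :: r)) r.length 0 1 := by
  induction L with
  | nil =>
    simp only [tourSeg_nil, List.length_nil, List.singleton_append, Nat.mul_zero, Nat.zero_add]
    rw [countArc_cons]
    simp
  | cons j t ih =>
    have h2 : 2 * (j :: t).length + (r.length + 1)
        = (2 * t.length + (r.length + 1)) + 1 + 1 := by simp; omega
    simp only [tourSeg_cons, List.cons_append] at ih ⊢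
    rw [h2, countArc_cons, countArc_cons, ih]
    simp

lemma cnt_block_xd (L r : List ℕ) :
    countArc (walkFn ((1 :: tourSeg L) ++ 0 :: r)) (2 * L.length + (r.length + 1)) 1 0 =
      1 + countArc (walkFn (0 :: r)) r.length 1 0 := by
  induction L with
  | nil =>
    simp only [tourSeg_nil, List.length_nil, List.singleton_append, Nat.mul_zero, Nat.zero_add]
    rw [countArc_cons]
    simp
  | cons j t ih =>
    have h2 : 2 * (j :: t).length + (r.length + 1)
        = (2 * t.length + (r.length + 1)) + 1 + 1 := by simp; omega
    simp only [tourSeg_cons, List.cons_append] at ih ⊢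
    rw [h2, countArc_cons, countArc_cons, ih]
    simp

lemma lenSum_cons (α₀ : ℕ) (α : ℕ → ℕ) (x : ℕ) (t : List ℕ) (ℓ : ℕ) :
    ∑ j ∈ Finset.range (ℓ + 1),
        starArcLen α₀ α (walkFn (x :: t) j) (walkFn (x :: t) (j + 1)) =
      starArcLen α₀ α x (walkFn t 0) +
        ∑ j ∈ Finset.range ℓ, starArcLen α₀ α (walkFn t j) (walkFn t (j + 1)) := by
  rw [Finset.sum_range_succ']
  simp only [walkFn_cons_succ, walkFn_cons_zero]
  exact add_comm _ _

lemma lsum_block (α₀ : ℕ) (α : ℕ → ℕ) (L r : List ℕ) :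
    ∑ j ∈ Finset.range (2 * L.length + (r.length + 1)),
        starArcLen α₀ α (walkFn ((1 :: tourSeg L) ++ 0 :: r) j)
          (walkFn ((1 :: tourSeg L) ++ 0 :: r) (j + 1)) =
      2 * (L.map α).sum + α₀ +
        ∑ j ∈ Finset.range r.length,
          starArcLen α₀ α (walkFn (0 :: r) j) (walkFn (0 :: r) (j + 1)) := by
  induction L with
  | nil =>
    simp only [tourSeg_nil, List.length_nil, List.singleton_append, List.map_nil,
      List.sum_nil, Nat.mul_zero, Nat.zero_add]
    rw [lenSum_cons]
    simp [starArcLen]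
  | cons j t ih =>
    have h2 : 2 * (j :: t).length + (r.length + 1)
        = (2 * t.length + (r.length + 1)) + 1 + 1 := by simp; omega
    simp only [tourSeg_cons, List.cons_append] at ih ⊢
    rw [h2, lenSum_cons, lenSum_cons, ih]
    simp [starArcLen]
    ring

lemma chain_block (n : ℕ) (L : List ℕ) (hL : ∀ i ∈ L, i < n) (r : List ℕ)
    (hr : List.Chain' (starAdj n) (0 :: r)) :
    List.Chain' (starAdj n) ((1 :: tourSeg L) ++ 0 :: r) := by
  induction L with
  | nil =>
    simp only [tourSeg_nil, List.singleton_append]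
    exact List.IsChain.cons_cons (Or.inr (Or.inl ⟨rfl, rfl⟩)) hr
  | cons j t ih =>
    have hj : j < n := hL j (by simp)
    simp only [tourSeg_cons, List.cons_append] at ih ⊢
    refine List.IsChain.cons_cons ?_ (List.IsChain.cons_cons ?_ (ih fun i hi => hL i (by simp [hi])))
    · exact Or.inr (Or.inr (Or.inl ⟨rfl, by omega, by omega⟩))
    · exact Or.inr (Or.inr (Or.inr ⟨by omega, by omega, rfl⟩))

lemma chain'_walkFn {n : ℕ} {V : List ℕ} (h : List.Chain' (starAdj n) V)
    (j : ℕ) (hj : j + 1 < V.length) :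
    starAdj n (walkFn V j) (walkFn V (j + 1)) := by
  have h1 : j < V.length - 1 := by omega
  have := List.isChain_iff_getElem.mp h j hj
  have e1 : walkFn V j = V.get ⟨j, by omega⟩ := by
    simp [walkFn, List.getD_eq_getElem?_getD, List.getElem?_eq_getElem (by omega : j < V.length)]
  have e2 : walkFn V (j + 1) = V.get ⟨j + 1, hj⟩ := by
    simp [walkFn, List.getD_eq_getElem?_getD, List.getElem?_eq_getElem hj]
  rw [e1, e2]
  exact this

lemma walkFn_mem {V : List ℕ} {j : ℕ} (hj : j < V.length) : walkFn V j ∈ V := by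
  have : walkFn V j = V.get ⟨j, hj⟩ := by
    simp [walkFn, List.getD_eq_getElem?_getD, List.getElem?_eq_getElem hj]
  rw [this]; exact V.get_mem _

lemma walkFn_append_left (A B : List ℕ) (j : ℕ) (h : j < A.length) :
    walkFn (A ++ B) j = walkFn A j := List.getD_append _ _ _ _ h

lemma walkFn_append_right (A B : List ℕ) (j : ℕ) (h : A.length ≤ j) :
    walkFn (A ++ B) j = walkFn B (j - A.length) := List.getD_append_right _ _ _ _ h

lemma walkFn_agree (A : List ℕ) (b : ℕ) (B C : List ℕ) (j : ℕ) (hj : j ≤ A.length) :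
    walkFn (A ++ b :: B) j = walkFn (A ++ b :: C) j := by
  rcases lt_or_eq_of_le hj with h | h
  · rw [walkFn_append_left _ _ _ h, walkFn_append_left _ _ _ h]
  · rw [walkFn_append_right _ _ _ (le_of_eq h.symm), walkFn_append_right _ _ _ (le_of_eq h.symm)]
    simp [h]

lemma block_mem_ne_zero {L : List ℕ} {x : ℕ} (hx : x ∈ 1 :: tourSeg L) : x ≠ 0 := by
  rcases List.mem_cons.mp hx with h | h
  · omega
  · exact tourSeg_ne_zero h

lemma zeros_characterization (L1 L2 : List ℕ) (j : ℕ)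
    (hj : j ≤ 2 * L1.length + 2 * L2.length + 4)
    (h0 : walkFn (0 :: ((1 :: tourSeg L1) ++ 0 :: ((1 :: tourSeg L2) ++ 0 :: []))) j = 0) :
    j = 0 ∨ j = 2 * L1.length + 2 ∨ j = 2 * L1.length + 2 * L2.length + 4 := by
  rcases Nat.eq_zero_or_pos j with h | h
  · exact Or.inl h
  obtain ⟨j', rfl⟩ : ∃ j', j = j' + 1 := ⟨j - 1, by omega⟩
  rw [walkFn_cons_succ] at h0
  set A := 1 :: tourSeg L1 with hA
  have hAL : A.length = 2 * L1.length + 1 := by simp [hA]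
  by_cases hlt : j' < A.length
  · exfalso
    rw [walkFn_append_left _ _ _ hlt] at h0
    exact block_mem_ne_zero (walkFn_mem hlt) h0
  push_neg at hlt
  rw [walkFn_append_right _ _ _ hlt] at h0
  have hub : j' - A.length ≤ 2 * L2.length + 2 := by omega
  rcases Nat.eq_zero_or_pos (j' - A.length) with h' | h'
  · right; left; omega
  obtain ⟨u', hu'⟩ : ∃ u', j' - A.length = u' + 1 := ⟨j' - A.length - 1, by omega⟩
  rw [hu', walkFn_cons_succ] at h0
  set B := 1 :: tourSeg L2 with hB
  have hBL : B.length = 2 * L2.length + 1 := by simp [hB]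
  by_cases hlt2 : u' < B.length
  · exfalso
    rw [walkFn_append_left _ _ _ hlt2] at h0
    exact block_mem_ne_zero (walkFn_mem hlt2) h0
  push_neg at hlt2
  have : u' - B.length = 0 := by omega
  right; right; omega

lemma cnt_tour_to_leaf (L1 L2 : List ℕ) (i : ℕ) :
    countArc (walkFn (0 :: ((1 :: tourSeg L1) ++ 0 :: ((1 :: tourSeg L2) ++ 0 :: []))))
      (2 * L1.length + 2 * L2.length + 4) 1 (i + 2) = L1.count i + L2.count i := by
  have h1 : 2 * L1.length + 2 * L2.length + 4
      = (2 * L1.length + (((1 :: tourSeg L2) ++ 0 :: []).length + 1)) + 1 := by simp; omega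
  rw [h1, countArc_cons, cnt_block_to_leaf]
  have h2 : ((1 :: tourSeg L2) ++ 0 :: []).length
      = (2 * L2.length + (List.length ([] : List ℕ) + 1)) + 1 := by simp
  rw [h2, countArc_cons, cnt_block_to_leaf]
  simp [countArc_zero]

lemma cnt_tour_from_leaf (L1 L2 : List ℕ) (i : ℕ) :
    countArc (walkFn (0 :: ((1 :: tourSeg L1) ++ 0 :: ((1 :: tourSeg L2) ++ 0 :: []))))
      (2 * L1.length + 2 * L2.length + 4) (i + 2) 1 = L1.count i + L2.count i := by
  have h1 : 2 * L1.length + 2 * L2.length + 4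
      = (2 * L1.length + (((1 :: tourSeg L2) ++ 0 :: []).length + 1)) + 1 := by simp; omega
  rw [h1, countArc_cons, cnt_block_from_leaf]
  have h2 : ((1 :: tourSeg L2) ++ 0 :: []).length
      = (2 * L2.length + (List.length ([] : List ℕ) + 1)) + 1 := by simp
  rw [h2, countArc_cons, cnt_block_from_leaf]
  simp [countArc_zero]

lemma cnt_tour_dx (L1 L2 : List ℕ) :
    countArc (walkFn (0 :: ((1 :: tourSeg L1) ++ 0 :: ((1 :: tourSeg L2) ++ 0 :: []))))
      (2 * L1.length + 2 * L2.length + 4) 0 1 = 2 := by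
  have h1 : 2 * L1.length + 2 * L2.length + 4
      = (2 * L1.length + (((1 :: tourSeg L2) ++ 0 :: []).length + 1)) + 1 := by simp; omega
  rw [h1, countArc_cons, cnt_block_dx]
  have h2 : ((1 :: tourSeg L2) ++ 0 :: []).length
      = (2 * L2.length + (List.length ([] : List ℕ) + 1)) + 1 := by simp
  rw [h2, countArc_cons, cnt_block_dx]
  simp [countArc_zero, List.cons_append]

lemma cnt_tour_xd (L1 L2 : List ℕ) :
    countArc (walkFn (0 :: ((1 :: tourSeg L1) ++ 0 :: ((1 :: tourSeg L2) ++ 0 :: []))))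
      (2 * L1.length + 2 * L2.length + 4) 1 0 = 2 := by
  have h1 : 2 * L1.length + 2 * L2.length + 4
      = (2 * L1.length + (((1 :: tourSeg L2) ++ 0 :: []).length + 1)) + 1 := by simp; omega
  rw [h1, countArc_cons, cnt_block_xd]
  have h2 : ((1 :: tourSeg L2) ++ 0 :: []).length
      = (2 * L2.length + (List.length ([] : List ℕ) + 1)) + 1 := by simp
  rw [h2, countArc_cons, cnt_block_xd]
  simp [countArc_zero]

lemma lsum_seg1 (α₀ : ℕ) (α : ℕ → ℕ) (L1 L2 : List ℕ) :
    ∑ j ∈ Finset.range (2 * L1.length + 2),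
      starArcLen α₀ α
        (walkFn (0 :: ((1 :: tourSeg L1) ++ 0 :: ((1 :: tourSeg L2) ++ 0 :: []))) j)
        (walkFn (0 :: ((1 :: tourSeg L1) ++ 0 :: ((1 :: tourSeg L2) ++ 0 :: []))) (j + 1)) =
      2 * (L1.map α).sum + 2 * α₀ := by
  have hagree : ∀ j ≤ 2 * L1.length + 2,
      walkFn (0 :: ((1 :: tourSeg L1) ++ 0 :: ((1 :: tourSeg L2) ++ 0 :: []))) j =
      walkFn (0 :: ((1 :: tourSeg L1) ++ 0 :: [])) j := by
    intro j hj
    have e1 : (0 :: ((1 :: tourSeg L1) ++ 0 :: ((1 :: tourSeg L2) ++ 0 :: [])))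
        = (0 :: 1 :: tourSeg L1) ++ 0 :: ((1 :: tourSeg L2) ++ 0 :: []) := by simp
    have e2 : (0 :: ((1 :: tourSeg L1) ++ 0 :: []))
        = (0 :: 1 :: tourSeg L1) ++ 0 :: [] := by simp
    rw [e1, e2]
    exact walkFn_agree _ _ _ _ j (by simp; omega)
  rw [Finset.sum_congr rfl (fun j hj => by
    rw [hagree j (by simp at hj; omega), hagree (j + 1) (by simp at hj; omega)])]
  have h1 : 2 * L1.length + 2 = (2 * L1.length + (List.length ([] : List ℕ) + 1)) + 1 := by simp
  rw [h1, lenSum_cons, lsum_block]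
  simp [starArcLen, List.cons_append]
  ring

lemma lsum_seg2 (α₀ : ℕ) (α : ℕ → ℕ) (L1 L2 : List ℕ) :
    ∑ j ∈ Finset.Ico (2 * L1.length + 2) (2 * L1.length + 2 * L2.length + 4),
      starArcLen α₀ α
        (walkFn (0 :: ((1 :: tourSeg L1) ++ 0 :: ((1 :: tourSeg L2) ++ 0 :: []))) j)
        (walkFn (0 :: ((1 :: tourSeg L1) ++ 0 :: ((1 :: tourSeg L2) ++ 0 :: []))) (j + 1)) =
      2 * (L2.map α).sum + 2 * α₀ := by
  have e1 : (0 :: ((1 :: tourSeg L1) ++ 0 :: ((1 :: tourSeg L2) ++ 0 :: [])))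
      = (0 :: 1 :: tourSeg L1) ++ 0 :: ((1 :: tourSeg L2) ++ 0 :: []) := by simp
  have hshift : ∀ j, walkFn (0 :: ((1 :: tourSeg L1) ++ 0 :: ((1 :: tourSeg L2) ++ 0 :: [])))
      (2 * L1.length + 2 + j) = walkFn (0 :: ((1 :: tourSeg L2) ++ 0 :: [])) j := by
    intro j
    rw [e1, walkFn_append_right _ _ _ (by simp only [List.length_cons, tourSeg_length]; omega)]
    congr 1
    simp only [List.length_cons, tourSeg_length]
    omega
  rw [Finset.sum_Ico_eq_sum_range]
  have hb : 2 * L1.length + 2 * L2.length + 4 - (2 * L1.length + 2) = 2 * L2.length + 2 := by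
    omega
  rw [hb, Finset.sum_congr rfl (fun j _ => by
    rw [show 2 * L1.length + 2 + j + 1 = 2 * L1.length + 2 + (j + 1) by omega,
      hshift j, hshift (j + 1)])]
  have h1 : 2 * L2.length + 2 = (2 * L2.length + (List.length ([] : List ℕ) + 1)) + 1 := by simp
  rw [h1, lenSum_cons, lsum_block]
  simp [starArcLen, List.cons_append]
  ring

lemma walk_at_mid (L1 L2 : List ℕ) :
    walkFn (0 :: ((1 :: tourSeg L1) ++ 0 :: ((1 :: tourSeg L2) ++ 0 :: [])))
      (2 * L1.length + 2) = 0 := by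
  have e1 : (0 :: ((1 :: tourSeg L1) ++ 0 :: ((1 :: tourSeg L2) ++ 0 :: [])))
      = (0 :: 1 :: tourSeg L1) ++ 0 :: ((1 :: tourSeg L2) ++ 0 :: []) := by simp
  rw [e1, walkFn_append_right _ _ _ (by simp only [List.length_cons, tourSeg_length]; omega)]
  have : 2 * L1.length + 2 - (0 :: 1 :: tourSeg L1).length = 0 := by
    simp only [List.length_cons, tourSeg_length]; omega
  rw [this, walkFn_cons_zero]

lemma walk_at_end (L1 L2 : List ℕ) :
    walkFn (0 :: ((1 :: tourSeg L1) ++ 0 :: ((1 :: tourSeg L2) ++ 0 :: [])))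
      (2 * L1.length + 2 * L2.length + 4) = 0 := by
  have e1 : (0 :: ((1 :: tourSeg L1) ++ 0 :: ((1 :: tourSeg L2) ++ 0 :: [])))
      = (0 :: 1 :: tourSeg L1) ++ 0 :: ((1 :: tourSeg L2) ++ 0 :: []) := by simp
  rw [e1, walkFn_append_right _ _ _ (by simp only [List.length_cons, tourSeg_length]; omega)]
  have h1 : 2 * L1.length + 2 * L2.length + 4 - (0 :: 1 :: tourSeg L1).length
      = 2 * L2.length + 1 + 1 := by
    simp only [List.length_cons, tourSeg_length]; omega
  rw [h1, walkFn_cons_succ, walkFn_append_right _ _ _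
    (by simp only [List.length_cons, tourSeg_length]; omega)]
  have h2 : 2 * L2.length + 1 - (1 :: tourSeg L2).length = 0 := by
    simp only [List.length_cons, tourSeg_length]; omega
  rw [h2, walkFn_cons_zero]

lemma backward_dir (n : ℕ) (hn : 1 ≤ n) (α₀ : ℕ) (α : ℕ → ℕ)
    (W : ℕ) (hW : W = ∑ i ∈ Finset.range n, α i)
    (I : Finset ℕ) (hIsub : I ⊆ Finset.range n) (hI2 : 2 * ∑ i ∈ I, α i = W) :
    (∃ (ℓ : ℕ) (w : ℕ → ℕ),
      w 0 = 0 ∧ w ℓ = 0 ∧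
      (∀ j < ℓ, starAdj n (w j) (w (j + 1))) ∧
      (∀ i < n, countArc w ℓ 1 (i + 2) = 1 ∧ countArc w ℓ (i + 2) 1 = 1) ∧
      countArc w ℓ 0 1 = 2 ∧ countArc w ℓ 1 0 = 2 ∧
      (∀ p q : ℕ, p < q → q ≤ ℓ → w p = 0 → w q = 0 →
        (∀ r, p < r → r < q → w r ≠ 0) →
        ∑ j ∈ Finset.Ico p q, starArcLen α₀ α (w j) (w (j + 1)) ≤ W + 2 * α₀)) := by
  classical
  set L1 : List ℕ := I.toList with hL1
  set L2 : List ℕ := ((Finset.range n) \ I).toList with hL2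
  set V : List ℕ := 0 :: ((1 :: tourSeg L1) ++ 0 :: ((1 :: tourSeg L2) ++ 0 :: [])) with hV
  have hlen1 : L1.length = I.card := Finset.length_toList I
  have hlen2 : L2.length = n - I.card := by
    rw [hL2, Finset.length_toList, Finset.card_sdiff_of_subset hIsub, Finset.card_range]
  have hcard : I.card ≤ n := by
    have := Finset.card_le_card hIsub
    simpa using this
  have hn4 : 2 * n + 4 = 2 * L1.length + 2 * L2.length + 4 := by omega
  have hVlen : V.length = 2 * n + 4 + 1 := by
    simp [hV]; omega
  -- chain
  have hmem1 : ∀ i ∈ L1, i < n := by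
    intro i hi
    have : i ∈ I := by rwa [hL1, Finset.mem_toList] at hi
    have := hIsub this
    simpa using this
  have hmem2 : ∀ i ∈ L2, i < n := by
    intro i hi
    have : i ∈ Finset.range n \ I := by rwa [hL2, Finset.mem_toList] at hi
    have := Finset.mem_sdiff.mp this
    simpa using this.1
  have cV : List.Chain' (starAdj n) V := by
    have c2 : List.Chain' (starAdj n) ((1 :: tourSeg L2) ++ 0 :: []) :=
      chain_block n L2 hmem2 [] (List.isChain_singleton 0)
    have c1 : List.Chain' (starAdj n) (0 :: ((1 :: tourSeg L2) ++ 0 :: [])) := by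
      simp only [List.cons_append] at c2 ⊢
      exact List.IsChain.cons_cons (Or.inl ⟨rfl, rfl⟩) c2
    have c0 : List.Chain' (starAdj n) ((1 :: tourSeg L1) ++ 0 :: ((1 :: tourSeg L2) ++ 0 :: [])) :=
      chain_block n L1 hmem1 _ c1
    rw [hV]
    simp only [List.cons_append] at c0 ⊢
    exact List.IsChain.cons_cons (Or.inl ⟨rfl, rfl⟩) c0
  -- counts of leaves
  have hcount : ∀ i < n, L1.count i + L2.count i = 1 := by
    intro i hi
    by_cases hiI : i ∈ I
    · have h1 : L1.count i = 1 :=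
        List.count_eq_one_of_mem (Finset.nodup_toList I) (Finset.mem_toList.mpr hiI)
      have h2 : L2.count i = 0 := by
        apply List.count_eq_zero_of_not_mem
        rw [hL2, Finset.mem_toList, Finset.mem_sdiff]
        tauto
      omega
    · have h1 : L1.count i = 0 := by
        apply List.count_eq_zero_of_not_mem
        rw [hL1, Finset.mem_toList]
        exact hiI
      have h2 : L2.count i = 1 := by
        apply List.count_eq_one_of_mem (Finset.nodup_toList _)
        exact Finset.mem_toList.mpr (Finset.mem_sdiff.mpr ⟨Finset.mem_range.mpr hi, hiI⟩)
      omega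
  -- sums
  have hsum1 : (L1.map α).sum = ∑ i ∈ I, α i := by
    rw [hL1]; exact Finset.sum_map_toList I α
  have hsum2 : (L2.map α).sum = ∑ i ∈ Finset.range n \ I, α i := by
    rw [hL2]; exact Finset.sum_map_toList _ α
  have hWsplit : ∑ i ∈ Finset.range n \ I, α i + ∑ i ∈ I, α i = W := by
    rw [hW]; exact Finset.sum_sdiff hIsub
  refine ⟨2 * n + 4, walkFn V, rfl, ?_, ?_, ?_, ?_, ?_, ?_⟩
  · rw [hV, hn4]; exact walk_at_end L1 L2
  · intro j hj
    exact chain'_walkFn cV j (by omega)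
  · intro i hi
    constructor
    · rw [hV, hn4, cnt_tour_to_leaf]; exact hcount i hi
    · rw [hV, hn4, cnt_tour_from_leaf]; exact hcount i hi
  · rw [hV, hn4]; exact cnt_tour_dx L1 L2
  · rw [hV, hn4]; exact cnt_tour_xd L1 L2
  · intro p q hpq hq hp0 hq0 hint
    have hzp := zeros_characterization L1 L2 p (by omega) hp0
    have hzq := zeros_characterization L1 L2 q (by omega) hq0
    have hmid : walkFn V (2 * L1.length + 2) = 0 := by rw [hV]; exact walk_at_mid L1 L2
    have hm2 : 2 * L1.length + 2 < 2 * n + 4 := by omega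
    -- the three possible segments
    rcases hzp with rfl | hp | hp
    · rcases hzq with rfl | hq' | hq'
      · omega
      · -- p = 0, q = mid
        rw [hq']
        have := lsum_seg1 α₀ α L1 L2
        have hIco : Finset.Ico 0 (2 * L1.length + 2) = Finset.range (2 * L1.length + 2) := by
          rw [Finset.range_eq_Ico]
        rw [hIco, hV, this, hsum1]
        omega
      · -- p = 0, q = end : impossible, mid is interior
        exfalso
        exact hint (2 * L1.length + 2) (by omega) (by omega) hmid
    · rcases hzq with rfl | hq' | hq'
      · omega
      · omega
      · -- p = mid, q = end
        rw [hp, hq']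
        have := lsum_seg2 α₀ α L1 L2
        rw [hV, this]
        omega
    · omega

lemma len_decomp (n : ℕ) (α₀ : ℕ) (α : ℕ → ℕ) (u v : ℕ) (h : starAdj n u v) :
    starArcLen α₀ α u v =
      (if u = 0 ∨ v = 0 then α₀ else 0) +
      ∑ i ∈ Finset.range n, α i *
        ((if u = 1 ∧ v = i + 2 then 1 else 0) + (if u = i + 2 ∧ v = 1 then 1 else 0)) := by
  rcases h with ⟨hu, hv⟩ | ⟨hu, hv⟩ | ⟨hu, hv1, hv2⟩ | ⟨hu1, hu2, hv⟩
  · subst hu; subst hv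
    rw [starArcLen, if_pos (Or.inl rfl), if_pos (Or.inl rfl)]
    rw [Finset.sum_eq_zero (fun i _ => by
      rw [if_neg (by omega), if_neg (by omega)]; ring)]
    omega
  · subst hu; subst hv
    rw [starArcLen, if_pos (Or.inr rfl), if_pos (Or.inr rfl)]
    rw [Finset.sum_eq_zero (fun i _ => by
      rw [if_neg (by omega), if_neg (by omega)]; ring)]
    omega
  · subst hu
    rw [Finset.sum_congr rfl (fun i _ => show
        α i * ((if 1 = 1 ∧ v = i + 2 then 1 else 0) + (if 1 = i + 2 ∧ v = 1 then 1 else 0))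
          = if i = v - 2 then α i else 0 by
      by_cases hiv : i = v - 2
      · rw [if_pos hiv, if_pos ⟨rfl, by omega⟩, if_neg (by omega)]; ring
      · rw [if_neg hiv, if_neg (by omega), if_neg (by omega)]; ring)]
    rw [Finset.sum_ite_eq', if_pos (Finset.mem_range.mpr (by omega))]
    simp [starArcLen, show ¬((1 : ℕ) = 0 ∨ v = 0) by omega, show v ≠ 0 by omega]
  · subst hv
    have hu1' : u ≠ 1 := by omega
    rw [Finset.sum_congr rfl (fun i _ => show
        α i * ((if u = 1 ∧ 1 = i + 2 then 1 else 0) + (if u = i + 2 ∧ 1 = 1 then 1 else 0))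
          = if i = u - 2 then α i else 0 by
      by_cases hiu : i = u - 2
      · rw [if_pos hiu, if_neg (by omega), if_pos ⟨by omega, rfl⟩]; ring
      · rw [if_neg hiu, if_neg (by omega), if_neg (by omega)]; ring)]
    rw [Finset.sum_ite_eq', if_pos (Finset.mem_range.mpr (by omega))]
    simp [starArcLen, show ¬(u = 0 ∨ (1 : ℕ) = 0) by omega, hu1', show u ≠ 0 by omega]

lemma sum_len (n ℓ : ℕ) (α₀ : ℕ) (α : ℕ → ℕ) (w : ℕ → ℕ)
    (hadj : ∀ j < ℓ, starAdj n (w j) (w (j + 1)))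
    (s : Finset ℕ) (hs : ∀ j ∈ s, j < ℓ) :
    ∑ j ∈ s, starArcLen α₀ α (w j) (w (j + 1)) =
      α₀ * ((s.filter fun j => w j = 0 ∨ w (j + 1) = 0).card) +
      ∑ i ∈ Finset.range n, α i *
        ((s.filter fun j => w j = 1 ∧ w (j + 1) = i + 2).card +
         (s.filter fun j => w j = i + 2 ∧ w (j + 1) = 1).card) := by
  classical
  rw [Finset.sum_congr rfl
    (fun j hj => len_decomp n α₀ α (w j) (w (j + 1)) (hadj j (hs j hj)))]
  rw [Finset.sum_add_distrib]
  congr 1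
  · rw [← Finset.sum_filter, Finset.sum_const, smul_eq_mul, mul_comm]
  · rw [Finset.sum_comm]
    refine Finset.sum_congr rfl (fun i _ => ?_)
    rw [← Finset.mul_sum, Finset.sum_add_distrib, Finset.card_filter, Finset.card_filter]

lemma pair_count (n ℓ : ℕ) (w : ℕ → ℕ)
    (hadj : ∀ j < ℓ, starAdj n (w j) (w (j + 1)))
    (p q i : ℕ) (hpq : p < q) (hqℓ : q ≤ ℓ) (hp0 : w p = 0) (hq0 : w q = 0) :
    ((Finset.Ico p q).filter fun j => w j = 1 ∧ w (j + 1) = i + 2).card =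
    ((Finset.Ico p q).filter fun j => w j = i + 2 ∧ w (j + 1) = 1).card := by
  classical
  apply le_antisymm
  · apply Finset.card_le_card_of_injOn (fun j => j + 1)
    · intro j hj
      simp only [Finset.mem_filter, Finset.mem_Ico, Finset.mem_coe] at hj ⊢
      obtain ⟨⟨hjp, hjq⟩, hj1, hj2⟩ := hj
      have hne : j + 1 ≠ q := fun h => by rw [h] at hj2; omega
      have hlt : j + 1 < q := by omega
      have hadj2 := hadj (j + 1) (by omega)
      rw [hj2] at hadj2
      have hw : w (j + 1 + 1) = 1 := by
        rcases hadj2 with ⟨h1, h2⟩ | ⟨h1, h2⟩ | ⟨h1, _⟩ | ⟨_, _, h3⟩ <;> omega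
      exact ⟨⟨by omega, hlt⟩, hj2, hw⟩
    · intro a _ b _ h; dsimp only at h; omega
  · apply Finset.card_le_card_of_injOn (fun j => j - 1)
    · intro j hj
      simp only [Finset.mem_filter, Finset.mem_Ico, Finset.mem_coe] at hj ⊢
      obtain ⟨⟨hjp, hjq⟩, hj1, hj2⟩ := hj
      have hjp' : p < j := by
        rcases Nat.lt_or_ge p j with h | h
        · exact h
        · exfalso; have : p = j := by omega
          rw [← this] at hj1; omega
      have hadj1 := hadj (j - 1) (by omega)
      have hj4 : j - 1 + 1 = j := by omega
      rw [hj4, hj1] at hadj1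
      have hw : w (j - 1) = 1 := by
        rcases hadj1 with ⟨h1, h2⟩ | ⟨h1, h2⟩ | ⟨h1, _⟩ | ⟨_, h2, h3⟩ <;> omega
      refine ⟨⟨by omega, by omega⟩, hw, by rw [hj4]; exact hj1⟩
    · intro a ha b hb h
      simp only [Finset.mem_coe, Finset.mem_filter, Finset.mem_Ico] at ha hb
      have ha' : p < a := by
        rcases Nat.lt_or_ge p a with h' | h'
        · exact h'
        · exfalso; have : p = a := by omega
          rw [← this] at ha; omega
      have hb' : p < b := by
        rcases Nat.lt_or_ge p b with h' | h'
        · exact h'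
        · exfalso; have : p = b := by omega
          rw [← this] at hb; omega
      dsimp only at h; omega

lemma forward_dir (n : ℕ) (α₀ : ℕ) (α : ℕ → ℕ)
    (W : ℕ) (hW : W = ∑ i ∈ Finset.range n, α i)
    (ℓ : ℕ) (w : ℕ → ℕ)
    (h0 : w 0 = 0) (hℓ0 : w ℓ = 0)
    (hadj : ∀ j < ℓ, starAdj n (w j) (w (j + 1)))
    (hleaf : ∀ i < n, countArc w ℓ 1 (i + 2) = 1 ∧ countArc w ℓ (i + 2) 1 = 1)
    (h01 : countArc w ℓ 0 1 = 2)
    (hseg : ∀ p q : ℕ, p < q → q ≤ ℓ → w p = 0 → w q = 0 →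
      (∀ r, p < r → r < q → w r ≠ 0) →
      ∑ j ∈ Finset.Ico p q, starArcLen α₀ α (w j) (w (j + 1)) ≤ W + 2 * α₀) :
    ∃ I ⊆ Finset.range n, 2 * ∑ i ∈ I, α i = W := by
  classical
  have hℓpos : 0 < ℓ := by
    rcases Nat.eq_zero_or_pos ℓ with h | h
    · exfalso; rw [h, countArc_zero] at h01; omega
    · exact h
  have hnext : ∀ j < ℓ, w j = 0 → w (j + 1) = 1 := by
    intro j hj hwj
    have := hadj j hj
    rw [hwj] at this
    rcases this with ⟨h1, h2⟩ | ⟨h1, h2⟩ | ⟨h1, _⟩ | ⟨h1, _, _⟩ <;> omega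
  have hZ : (Finset.range ℓ).filter (fun j => w j = 0)
      = (Finset.range ℓ).filter (fun j => w j = 0 ∧ w (j + 1) = 1) := by
    apply Finset.filter_congr
    intro j hj
    simp only [Finset.mem_range] at hj
    exact ⟨fun h => ⟨h, hnext j hj h⟩, fun h => h.1⟩
  have hZcard : ((Finset.range ℓ).filter (fun j => w j = 0)).card = 2 := by
    rw [hZ]; exact h01
  obtain ⟨x, y, hxy, hset⟩ := Finset.card_eq_two.mp hZcard
  have h0mem : (0 : ℕ) ∈ (Finset.range ℓ).filter (fun j => w j = 0) := by
    simp [Finset.mem_filter, hℓpos, h0]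
  obtain ⟨m, hmne, hmmem⟩ :
      ∃ m, m ≠ 0 ∧ m ∈ (Finset.range ℓ).filter (fun j => w j = 0) := by
    have h0' : (0 : ℕ) ∈ ({x, y} : Finset ℕ) := hset ▸ h0mem
    simp only [Finset.mem_insert, Finset.mem_singleton] at h0'
    rcases h0' with h | h
    · exact ⟨y, by omega, by rw [hset]; simp⟩
    · exact ⟨x, by omega, by rw [hset]; simp⟩
  have hmℓ : m < ℓ := by
    have := (Finset.mem_filter.mp hmmem).1; simpa using this
  have hwm : w m = 0 := (Finset.mem_filter.mp hmmem).2
  have huniq : ∀ j, j < ℓ → w j = 0 → j = 0 ∨ j = m := by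
    intro j hj hwj
    have hjm : j ∈ (Finset.range ℓ).filter (fun j => w j = 0) := by
      simp [Finset.mem_filter, hj, hwj]
    rw [hset] at hjm hmmem h0mem
    simp only [Finset.mem_insert, Finset.mem_singleton] at hjm hmmem h0mem
    rcases h0mem with h1 | h1 <;> rcases hmmem with h2 | h2 <;> rcases hjm with h3 | h3 <;> omega
  have hw1 : w 1 = 1 := hnext 0 hℓpos h0
  have hm2 : 2 ≤ m := by
    rcases Nat.lt_or_ge m 2 with h | h
    · exfalso
      have : m = 1 := by omega
      rw [this] at hwm; omega
    · exact h
  have hmsucc : w (m + 1) = 1 := hnext m hmℓ hwm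
  have hℓm2 : m + 2 ≤ ℓ := by
    rcases Nat.lt_or_ge (m + 1) ℓ with h | h
    · omega
    · exfalso
      have : ℓ = m + 1 := by omega
      rw [this] at hℓ0; omega
  -- the two boundary-arc sets
  have hA1 : (Finset.Ico 0 m).filter (fun j => w j = 0 ∨ w (j + 1) = 0)
      = ({0, m - 1} : Finset ℕ) := by
    ext j
    simp only [Finset.mem_filter, Finset.mem_Ico, Finset.mem_insert, Finset.mem_singleton]
    constructor
    · rintro ⟨⟨-, hjm⟩, hj0 | hj1⟩
      · rcases huniq j (by omega) hj0 with h | h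
        · exact Or.inl h
        · omega
      · have hlt : j + 1 < ℓ := by omega
        rcases huniq (j + 1) hlt hj1 with h | h <;> omega
    · rintro (rfl | rfl)
      · exact ⟨⟨by omega, by omega⟩, Or.inl h0⟩
      · refine ⟨⟨by omega, by omega⟩, Or.inr ?_⟩
        rw [show m - 1 + 1 = m by omega]; exact hwm
  have hA1card : ((Finset.Ico 0 m).filter (fun j => w j = 0 ∨ w (j + 1) = 0)).card = 2 := by
    rw [hA1, Finset.card_insert_of_notMem (by simp; omega), Finset.card_singleton]
  have hA2 : (Finset.Ico m ℓ).filter (fun j => w j = 0 ∨ w (j + 1) = 0)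
      = ({m, ℓ - 1} : Finset ℕ) := by
    ext j
    simp only [Finset.mem_filter, Finset.mem_Ico, Finset.mem_insert, Finset.mem_singleton]
    constructor
    · rintro ⟨⟨hmj, hjℓ⟩, hj0 | hj1⟩
      · rcases huniq j (by omega) hj0 with h | h <;> omega
      · rcases Nat.lt_or_ge (j + 1) ℓ with h | h
        · rcases huniq (j + 1) h hj1 with h' | h' <;> omega
        · omega
    · rintro (rfl | rfl)
      · exact ⟨⟨by omega, by omega⟩, Or.inl hwm⟩
      · refine ⟨⟨by omega, by omega⟩, Or.inr ?_⟩
        rw [show ℓ - 1 + 1 = ℓ by omega]; exact hℓ0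
  have hA2card : ((Finset.Ico m ℓ).filter (fun j => w j = 0 ∨ w (j + 1) = 0)).card = 2 := by
    rw [hA2, Finset.card_insert_of_notMem (by simp; omega), Finset.card_singleton]
  -- pairing within segments
  have hpair1 : ∀ i, ((Finset.Ico 0 m).filter fun j => w j = i + 2 ∧ w (j + 1) = 1).card
      = ((Finset.Ico 0 m).filter fun j => w j = 1 ∧ w (j + 1) = i + 2).card :=
    fun i => (pair_count n ℓ w hadj 0 m i (by omega) (by omega) h0 hwm).symm
  have hpair2 : ∀ i, ((Finset.Ico m ℓ).filter fun j => w j = i + 2 ∧ w (j + 1) = 1).card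
      = ((Finset.Ico m ℓ).filter fun j => w j = 1 ∧ w (j + 1) = i + 2).card :=
    fun i => (pair_count n ℓ w hadj m ℓ i (by omega) le_rfl hwm hℓ0).symm
  -- segment sums
  have hs1 := sum_len n ℓ α₀ α w hadj (Finset.Ico 0 m)
    (fun j hj => by simp only [Finset.mem_Ico] at hj; omega)
  have hs2 := sum_len n ℓ α₀ α w hadj (Finset.Ico m ℓ)
    (fun j hj => by simp only [Finset.mem_Ico] at hj; omega)
  rw [hA1card] at hs1
  rw [hA2card] at hs2
  rw [Finset.sum_congr rfl (fun i _ => show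
      α i * (((Finset.Ico 0 m).filter fun j => w j = 1 ∧ w (j + 1) = i + 2).card
        + ((Finset.Ico 0 m).filter fun j => w j = i + 2 ∧ w (j + 1) = 1).card)
      = α i * (2 * ((Finset.Ico 0 m).filter fun j => w j = 1 ∧ w (j + 1) = i + 2).card) by
    rw [hpair1 i]; ring)] at hs1
  rw [Finset.sum_congr rfl (fun i _ => show
      α i * (((Finset.Ico m ℓ).filter fun j => w j = 1 ∧ w (j + 1) = i + 2).card
        + ((Finset.Ico m ℓ).filter fun j => w j = i + 2 ∧ w (j + 1) = 1).card)
      = α i * (2 * ((Finset.Ico m ℓ).filter fun j => w j = 1 ∧ w (j + 1) = i + 2).card) by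
    rw [hpair2 i]; ring)] at hs2
  -- segment bounds
  have hS1le := hseg 0 m (by omega) (by omega) h0 hwm
    (fun r h1 h2 hr0 => by rcases huniq r (by omega) hr0 with h | h <;> omega)
  have hS2le := hseg m ℓ hmℓ le_rfl hwm hℓ0
    (fun r h1 h2 hr0 => by rcases huniq r (by omega) hr0 with h | h <;> omega)
  rw [hs1] at hS1le
  rw [hs2] at hS2le
  -- split of the leaf counts
  have hbsplit : ∀ i < n,
      ((Finset.Ico 0 m).filter fun j => w j = 1 ∧ w (j + 1) = i + 2).card
      + ((Finset.Ico m ℓ).filter fun j => w j = 1 ∧ w (j + 1) = i + 2).card = 1 := by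
    intro i hi
    have hu : Finset.Ico 0 m ∪ Finset.Ico m ℓ = Finset.range ℓ := by
      rw [Finset.range_eq_Ico]
      exact Finset.Ico_union_Ico_eq_Ico (by omega) (by omega)
    have hcnt := (hleaf i hi).1
    rw [countArc, ← hu, Finset.filter_union, Finset.card_union_of_disjoint
      (Finset.disjoint_filter_filter (Finset.Ico_disjoint_Ico_consecutive 0 m ℓ))] at hcnt
    exact hcnt
  -- total of the two segment leaf sums
  have htot : ∑ i ∈ Finset.range n,
        α i * (2 * ((Finset.Ico 0 m).filter fun j => w j = 1 ∧ w (j + 1) = i + 2).card)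
      + ∑ i ∈ Finset.range n,
        α i * (2 * ((Finset.Ico m ℓ).filter fun j => w j = 1 ∧ w (j + 1) = i + 2).card)
      = 2 * W := by
    rw [← Finset.sum_add_distrib]
    rw [Finset.sum_congr rfl (fun i hi => show
        α i * (2 * ((Finset.Ico 0 m).filter fun j => w j = 1 ∧ w (j + 1) = i + 2).card)
        + α i * (2 * ((Finset.Ico m ℓ).filter fun j => w j = 1 ∧ w (j + 1) = i + 2).card)
        = 2 * α i by
      have hsp := hbsplit i (Finset.mem_range.mp hi)
      calc α i * (2 * ((Finset.Ico 0 m).filter fun j => w j = 1 ∧ w (j + 1) = i + 2).card)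
          + α i * (2 * ((Finset.Ico m ℓ).filter fun j => w j = 1 ∧ w (j + 1) = i + 2).card)
          = α i * (2 * (((Finset.Ico 0 m).filter fun j => w j = 1 ∧ w (j + 1) = i + 2).card
            + ((Finset.Ico m ℓ).filter fun j => w j = 1 ∧ w (j + 1) = i + 2).card)) := by ring
        _ = 2 * α i := by rw [hsp]; ring)]
    rw [← Finset.mul_sum, hW]
  -- both segment leaf sums equal W
  have hb1W : ∑ i ∈ Finset.range n,
      α i * (2 * ((Finset.Ico 0 m).filter fun j => w j = 1 ∧ w (j + 1) = i + 2).card) = W := by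
    omega
  -- conclude with the subset
  refine ⟨(Finset.range n).filter (fun i =>
    ((Finset.Ico 0 m).filter fun j => w j = 1 ∧ w (j + 1) = i + 2).card = 1),
    Finset.filter_subset _ _, ?_⟩
  have hfinal : ∑ i ∈ Finset.range n,
      α i * (2 * ((Finset.Ico 0 m).filter fun j => w j = 1 ∧ w (j + 1) = i + 2).card)
      = 2 * ∑ i ∈ (Finset.range n).filter (fun i =>
        ((Finset.Ico 0 m).filter fun j => w j = 1 ∧ w (j + 1) = i + 2).card = 1), α i := by
    rw [Finset.mul_sum]
    rw [← Finset.sum_filter_add_sum_filter_not (Finset.range n) (fun i =>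
      ((Finset.Ico 0 m).filter fun j => w j = 1 ∧ w (j + 1) = i + 2).card = 1) (fun i =>
      α i * (2 * ((Finset.Ico 0 m).filter fun j => w j = 1 ∧ w (j + 1) = i + 2).card))]
    have e1 : ∑ i ∈ (Finset.range n).filter (fun i =>
        ((Finset.Ico 0 m).filter fun j => w j = 1 ∧ w (j + 1) = i + 2).card = 1),
        α i * (2 * ((Finset.Ico 0 m).filter fun j => w j = 1 ∧ w (j + 1) = i + 2).card)
        = ∑ i ∈ (Finset.range n).filter (fun i =>
        ((Finset.Ico 0 m).filter fun j => w j = 1 ∧ w (j + 1) = i + 2).card = 1), 2 * α i := by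
      refine Finset.sum_congr rfl (fun i hi => ?_)
      have : ((Finset.Ico 0 m).filter fun j => w j = 1 ∧ w (j + 1) = i + 2).card = 1 :=
        (Finset.mem_filter.mp hi).2
      rw [this]; ring
    have e2 : ∑ i ∈ (Finset.range n).filter (fun i =>
        ¬((Finset.Ico 0 m).filter fun j => w j = 1 ∧ w (j + 1) = i + 2).card = 1),
        α i * (2 * ((Finset.Ico 0 m).filter fun j => w j = 1 ∧ w (j + 1) = i + 2).card)
        = 0 := by
      refine Finset.sum_eq_zero (fun i hi => ?_)
      have hmem := Finset.mem_filter.mp hi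
      have hiN := Finset.mem_range.mp hmem.1
      have := hbsplit i hiN
      have : ((Finset.Ico 0 m).filter fun j => w j = 1 ∧ w (j + 1) = i + 2).card = 0 := by
        omega
      rw [this]; ring
    rw [e1, e2, add_zero]
  omega

end StarRoute

/-- On the star with leaves `u_1, …, u_n` of lengths `α_1, …, α_n` rooted at the
pendant depot `d`, a closed walk from `d` traversing each arc `(x, u_i)` and `(u_i, x)`
exactly once, each arc `(d, x)` and `(x, d)` exactly twice, and whose length between any
two consecutive visits of `d` is at most `W + 2 * α₀`, exists if and only if some subset
of the leaf lengths sums to `W / 2` (where `W = α_1 + ⋯ + α_n`). -/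
theorem star_route_iff_partition (n : ℕ) (hn : 1 ≤ n) (α₀ : ℕ) (hα₀ : 0 < α₀)
    (α : ℕ → ℕ) (hα : ∀ i < n, 0 < α i)
    (W : ℕ) (hW : W = ∑ i ∈ Finset.range n, α i) :
    (∃ (ℓ : ℕ) (w : ℕ → ℕ),
      w 0 = 0 ∧ w ℓ = 0 ∧
      (∀ j < ℓ, starAdj n (w j) (w (j + 1))) ∧
      (∀ i < n, countArc w ℓ 1 (i + 2) = 1 ∧ countArc w ℓ (i + 2) 1 = 1) ∧
      countArc w ℓ 0 1 = 2 ∧ countArc w ℓ 1 0 = 2 ∧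
      (∀ p q : ℕ, p < q → q ≤ ℓ → w p = 0 → w q = 0 →
        (∀ r, p < r → r < q → w r ≠ 0) →
        ∑ j ∈ Finset.Ico p q, starArcLen α₀ α (w j) (w (j + 1)) ≤ W + 2 * α₀)) ↔
    (∃ I ⊆ Finset.range n, 2 * ∑ i ∈ I, α i = W) := by
  constructor
  · rintro ⟨ℓ, w, h0, hℓ0, hadj, hleaf, h01, h10, hseg⟩
    exact StarRoute.forward_dir n α₀ α W hW ℓ w h0 hℓ0 hadj hleaf h01 hseg
  · rintro ⟨I, hIsub, hI2⟩
    exact StarRoute.backward_dir n hn α₀ α W hW I hIsub hI2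
end

section
/- If S is a set of n positive integers with distinct subset sums, then max S ≥ 2^n / (10·√n). -/
lemma sum_sq_dev (S : Finset ℕ) :
    ∑ X ∈ S.powerset, (2*(∑ x ∈ X, (x:ℤ)) - ∑ x ∈ S, (x:ℤ))^2
      = 2^S.card * ∑ x ∈ S, (x:ℤ)^2 := by
  induction S using Finset.induction_on with
  | empty => simp
  | insert a s ha ih =>
    rw [Finset.powerset_insert, Finset.sum_union, Finset.sum_image]
    · have h1 : ∀ X ∈ s.powerset,
        (2*(∑ x ∈ insert a X, (x:ℤ)) - ∑ x ∈ insert a s, (x:ℤ))^2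
          = ((2*(∑ x ∈ X, (x:ℤ)) - ∑ x ∈ s, (x:ℤ)) + a)^2 := by
        intro X hX
        have haX : a ∉ X := fun h => ha (Finset.mem_powerset.mp hX h)
        rw [Finset.sum_insert haX, Finset.sum_insert ha]
        push_cast; ring
      have h2 : ∀ X ∈ s.powerset,
        (2*(∑ x ∈ X, (x:ℤ)) - ∑ x ∈ insert a s, (x:ℤ))^2
          = ((2*(∑ x ∈ X, (x:ℤ)) - ∑ x ∈ s, (x:ℤ)) - a)^2 := by
        intro X hX
        rw [Finset.sum_insert ha]
        push_cast; ring
      rw [Finset.sum_congr rfl h1, Finset.sum_congr rfl h2, ← Finset.sum_add_distrib]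
      have h3 : ∀ X ∈ s.powerset,
          ((2*(∑ x ∈ X, (x:ℤ)) - ∑ x ∈ s, (x:ℤ)) - a)^2
          + ((2*(∑ x ∈ X, (x:ℤ)) - ∑ x ∈ s, (x:ℤ)) + a)^2
          = 2*(2*(∑ x ∈ X, (x:ℤ)) - ∑ x ∈ s, (x:ℤ))^2 + 2*(a:ℤ)^2 := by
        intro X hX; ring
      rw [Finset.sum_congr rfl h3, Finset.sum_add_distrib, ← Finset.mul_sum, ih,
        Finset.sum_const, Finset.card_powerset, Finset.sum_insert ha,
        Finset.card_insert_of_notMem ha]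
      push_cast; ring
    · intro X hX Y hY hXY
      have haX : a ∉ X := fun h => ha (Finset.mem_powerset.mp hX h)
      have haY : a ∉ Y := fun h => ha (Finset.mem_powerset.mp hY h)
      rw [← Finset.erase_insert haX, ← Finset.erase_insert haY, hXY]
    · rw [Finset.disjoint_left]
      intro X hX hX2
      obtain ⟨Y, hY, rfl⟩ := Finset.mem_image.mp hX2
      exact ha (Finset.mem_powerset.mp hX (Finset.mem_insert_self a Y))

/-- A finite set of positive integers has distinct subset sums if distinct subsets
always have distinct sums. -/
def DistinctSubsetSums (S : Finset ℕ) : Prop :=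
  ∀ X ⊆ S, ∀ Y ⊆ S, ∑ x ∈ X, x = ∑ y ∈ Y, y → X = Y

/-- Erdős–Moser lower bound: if `S` is a set of `n` positive integers with distinct
subset sums, then `max S ≥ 2 ^ n / (10 * √n)`. -/
theorem erdos_moser_lower_bound (n : ℕ) (hn : 0 < n) (S : Finset ℕ)
    (hcard : S.card = n) (hpos : ∀ x ∈ S, 0 < x)
    (hdss : DistinctSubsetSums S) (hne : S.Nonempty) :
    (2 : ℝ) ^ n / (10 * Real.sqrt n) ≤ (S.max' hne : ℝ) := by
  set m : ℕ := S.max' hne with hm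
  have hmpos : 0 < m := hpos _ (S.max'_mem hne)
  have hsqrtpos : 0 < Real.sqrt n := Real.sqrt_pos.mpr (by exact_mod_cast hn)
  rw [div_le_iff₀ (by positivity)]
  set Q : ℤ := ∑ x ∈ S, (x:ℤ)^2 with hQ
  have hQpos : 0 < Q := by
    apply Finset.sum_pos _ hne
    intro x hx
    exact pow_pos (by exact_mod_cast hpos x hx) 2
  have hQle : Q ≤ n * m^2 := by
    calc Q ≤ ∑ _x ∈ S, (m:ℤ)^2 := by
          apply Finset.sum_le_sum
          intro x hx
          have hx' : x ≤ m := S.le_max' x hx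
          have hxm : (x:ℤ) ≤ m := by exact_mod_cast hx'
          nlinarith [Int.ofNat_nonneg x]
      _ = n * m^2 := by rw [Finset.sum_const, hcard]; push_cast; ring
  set T : ℤ := ∑ x ∈ S, (x:ℤ) with hT
  set g : Finset ℕ → ℤ := fun X => 2*(∑ x ∈ X, (x:ℤ)) - T with hg
  have hinj : ∀ X ∈ S.powerset, ∀ Y ∈ S.powerset, g X = g Y → X = Y := by
    intro X hX Y hY hXY
    apply hdss X (Finset.mem_powerset.mp hX) Y (Finset.mem_powerset.mp hY)
    have h1 : ((∑ x ∈ X, x : ℕ) : ℤ) = ((∑ y ∈ Y, y : ℕ) : ℤ) := by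
      push_cast
      simp only [hg] at hXY
      linarith
    exact_mod_cast h1
  set G : Finset (Finset ℕ) := S.powerset.filter (fun X => (g X)^2 < 4*Q) with hGdef
  set B : Finset (Finset ℕ) := S.powerset.filter (fun X => ¬ (g X)^2 < 4*Q) with hBdef
  have hcards : G.card + B.card = 2^n := by
    rw [hGdef, hBdef, Finset.card_filter_add_card_filter_not,
      Finset.card_powerset, hcard]
  have hBbound : (B.card : ℤ) * (4*Q) ≤ 2^n * Q := by
    calc (B.card : ℤ) * (4*Q) = ∑ _X ∈ B, 4*Q := by rw [Finset.sum_const]; ring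
      _ ≤ ∑ X ∈ B, (g X)^2 := by
          apply Finset.sum_le_sum
          intro X hX
          exact le_of_not_gt (Finset.mem_filter.mp hX).2
      _ ≤ ∑ X ∈ S.powerset, (g X)^2 := by
          apply Finset.sum_le_sum_of_subset_of_nonneg (Finset.filter_subset _ _)
          intro X _ _; positivity
      _ = 2^n * Q := by rw [hg, hT, hQ, sum_sq_dev, hcard]
  have hB4 : 4 * (B.card : ℤ) ≤ 2^n := by
    have h' : (4*(B.card:ℤ))*Q ≤ 2^n*Q := by linear_combination hBbound
    exact le_of_mul_le_mul_right h' hQpos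
  have hG3 : 3 * 2^n ≤ 4 * (G.card : ℤ) := by
    have hc : (G.card : ℤ) + B.card = 2^n := by exact_mod_cast hcards
    linarith
  set b : ℕ := Nat.sqrt (4*n*m^2) with hb
  have hGcard : G.card ≤ 2*b + 1 := by
    have hle : G.card ≤ (Finset.Icc (-(b:ℤ)) b).card := by
      apply Finset.card_le_card_of_injOn g
      · intro X hX
        have hX' := Finset.mem_filter.mp hX
        have h1 : (g X)^2 < 4*Q := hX'.2
        have h2 : (g X)^2 ≤ ((4*n*m^2 : ℕ) : ℤ) := by push_cast; nlinarith
        have hsucc : ((4*n*m^2 : ℕ):ℤ) < ((b:ℤ)+1)^2 := by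
          have := Nat.lt_succ_sqrt' (4*n*m^2)
          push_cast
          push_cast at this
          nlinarith
        have habs : |g X| ≤ (b:ℤ) := by
          nlinarith [sq_abs (g X), abs_nonneg (g X)]
        simp only [Finset.coe_Icc, Set.mem_Icc, Finset.mem_coe, Finset.mem_Icc]
        constructor
        · linarith [neg_abs_le (g X)]
        · linarith [le_abs_self (g X)]
      · intro X hX Y hY h
        exact hinj X (Finset.filter_subset _ _ hX) Y (Finset.filter_subset _ _ hY) h
    rw [Int.card_Icc] at hle
    omega
  -- combine in ℤ then ℝ
  have hZ : 3 * (2:ℤ)^n ≤ 8*b + 4 := by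
    have : (G.card : ℤ) ≤ 2*b+1 := by exact_mod_cast hGcard
    linarith
  have hR : 3 * (2:ℝ)^n ≤ 8*b + 4 := by exact_mod_cast hZ
  have hbR : (b:ℝ) ≤ 2*m*Real.sqrt n := by
    have h1 : (b:ℝ)^2 ≤ ((4*n*m^2 : ℕ) : ℝ) := by
      exact_mod_cast Nat.sqrt_le' (4*n*m^2)
    have h2 : ((4*n*m^2 : ℕ) : ℝ) = (2*m)^2 * n := by push_cast; ring
    calc (b:ℝ) = Real.sqrt ((b:ℝ)^2) := (Real.sqrt_sq (by positivity)).symm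
      _ ≤ Real.sqrt ((2*m)^2 * n) := Real.sqrt_le_sqrt (h1.trans_eq h2)
      _ = 2*m*Real.sqrt n := by
          rw [Real.sqrt_mul (by positivity), Real.sqrt_sq (by positivity)]
  have hm1 : (1:ℝ) ≤ m := by exact_mod_cast hmpos
  by_cases h1 : n = 1
  · subst h1
    simp only [pow_one, Nat.cast_one, Real.sqrt_one]
    nlinarith
  · have hn2 : 2 ≤ n := by omega
    have h4 : (4:ℝ) ≤ 2^n := by
      calc (4:ℝ) = 2^2 := by norm_num
        _ ≤ 2^n := pow_le_pow_right₀ one_le_two hn2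
    nlinarith [Real.sqrt_nonneg (n:ℝ), mul_nonneg (by positivity : (0:ℝ) ≤ (m:ℝ)) (Real.sqrt_nonneg (n:ℝ))]
end
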